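/- arXiv:1406.2560 — 6 statements merged into one kernel-verified Lean document; each statement's English description precedes it below -/
import Mathlib

section
/- For every n ∈ ℕ and every real L with 1/2 < L ≤ 1 there exists a nonzero polynomial P(x) = Σ_{j=0}^n a_j x^j with complex coefficients satisfying |a_0| ≥ L·Σ_{j=1}^n |a_j|, such that (x−1)^k divides P(x) for some integer k ≥ (1/5)·√(n(1−L)) − 1. -/
open Polynomial Finset

-- divisibility from vanishing taylor coefficients
lemma dvd_of_taylor {R : Type*} [CommRing R] (f : R[X]) (r : R) (k : ℕ)
    (h : ∀ i < k, (Polynomial.taylor r f).coeff i = 0) : (X - C r)^k ∣ f := by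
  conv_rhs => rw [← Polynomial.sum_taylor_eq f r]
  unfold Polynomial.sum
  apply Finset.dvd_sum
  intro i hi
  rcases le_or_gt k i with hk | hk
  · exact Dvd.dvd.mul_left (pow_dvd_pow _ hk) _
  · rw [h i hk]; simp

-- ∏ (1+u) ≤ (1 - ∑ u)⁻¹
lemma prod_one_add_le {ι : Type*} (s : Finset ι) (u : ι → ℝ)
    (h0 : ∀ i ∈ s, 0 ≤ u i) (h1 : ∑ i ∈ s, u i < 1) :
    ∏ i ∈ s, (1 + u i) ≤ (1 - ∑ i ∈ s, u i)⁻¹ := by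
  induction s using Finset.cons_induction with
  | empty => simp
  | cons a s ha ih =>
    rw [Finset.prod_cons, Finset.sum_cons] at *
    have hua : 0 ≤ u a := h0 a (by simp)
    have hsum0 : 0 ≤ ∑ i ∈ s, u i := Finset.sum_nonneg (fun i hi => h0 i (by simp [hi]))
    have hs1 : ∑ i ∈ s, u i < 1 := by linarith
    have ih' := ih (fun i hi => h0 i (by simp [hi])) hs1
    have hpos : (0:ℝ) < 1 - ∑ i ∈ s, u i := by linarith
    have hpos2 : (0:ℝ) < 1 - (u a + ∑ i ∈ s, u i) := by linarith
    calc (1 + u a) * ∏ i ∈ s, (1 + u i) ≤ (1 + u a) * (1 - ∑ i ∈ s, u i)⁻¹ := by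
          apply mul_le_mul_of_nonneg_left ih' (by linarith)
      _ ≤ (1 - (u a + ∑ i ∈ s, u i))⁻¹ := by
          rw [inv_eq_one_div, inv_eq_one_div, mul_one_div, div_le_div_iff₀ hpos hpos2]
          nlinarith

-- sum of 1/i^2 ≤ 2
lemma sum_inv_sq' (K : ℕ) (hK : 1 ≤ K) : ∑ i ∈ Icc 1 K, ((i:ℝ)^2)⁻¹ ≤ 2 - ((K:ℝ))⁻¹ := by
  induction K, hK using Nat.le_induction with
  | base => norm_num
  | succ K hK ih =>
    rw [Finset.sum_Icc_succ_top (by omega)]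
    have h1 : (0:ℝ) < (K:ℝ) := by exact_mod_cast hK
    have key : (((K+1:ℕ):ℝ)^2)⁻¹ ≤ ((K:ℝ))⁻¹ - (((K+1:ℕ)):ℝ)⁻¹ := by
      push_cast
      have e : ((K:ℝ))⁻¹ - ((K:ℝ)+1)⁻¹ = ((K:ℝ)*((K:ℝ)+1))⁻¹ := by
        rw [inv_eq_one_div, inv_eq_one_div, inv_eq_one_div]
        rw [div_sub_div _ _ (ne_of_gt h1) (by positivity)]
        ring_nf
      rw [e]
      apply inv_anti₀ (by positivity)
      nlinarith
    push_cast at *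
    linarith

lemma sum_inv_sq (K : ℕ) : ∑ i ∈ Icc 1 K, ((i:ℝ)^2)⁻¹ ≤ 2 := by
  rcases Nat.eq_zero_or_pos K with h | h
  · simp [h]
  · have := sum_inv_sq' K h
    have h1 : (0:ℝ) < (K:ℝ) := by exact_mod_cast h
    have : (0:ℝ) < (K:ℝ)⁻¹ := by positivity
    linarith [sum_inv_sq' K h]

-- (K!)^2 ≤ (K-i)! * (K+i)!
lemma fact_sq_le (K : ℕ) : ∀ i ≤ K, (K.factorial)^2 ≤ (K - i).factorial * (K + i).factorial := by
  intro i
  induction i with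
  | zero => simp [sq]
  | succ i ih =>
    intro hi
    have h1 := ih (by omega)
    have e1 : K - i = (K - (i+1)) + 1 := by omega
    have e2 : (K + (i+1)) = (K + i) + 1 := by omega
    rw [e1, Nat.factorial_succ] at h1
    rw [e2, Nat.factorial_succ]
    calc (K.factorial)^2 ≤ (K - (i+1) + 1) * ((K - (i+1)).factorial * (K+i).factorial) := by
          rw [← mul_assoc]; exact h1
    _ ≤ (K + i + 1) * ((K - (i+1)).factorial * (K+i).factorial) := by
          apply Nat.mul_le_mul_right; omega
    _ = (K - (i+1)).factorial * ((K + i + 1) * (K+i).factorial) := by ring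

-- ∏_{j=1}^n (m+j) * m! = (m+n)!
lemma prod_shift (m : ℕ) : ∀ n : ℕ, m.factorial * ∏ j ∈ Icc 1 n, (m + j) = (m + n).factorial := by
  intro n
  induction n with
  | zero => simp
  | succ n ih =>
    rw [Finset.prod_Icc_succ_top (by omega), ← mul_assoc, ih, ← Nat.add_assoc,
      Nat.factorial_succ]
    ring

-- reflection: ∏_{j=1}^n (n+1-j) = n!
lemma prod_reflect (n : ℕ) : ∏ j ∈ Icc 1 n, (n + 1 - j) = n.factorial := by
  have h : Icc 1 n = Ico 1 (n+1) := by ext a; simp [Nat.lt_succ_iff]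
  rw [h, Finset.prod_Ico_eq_prod_range]
  have hn : n + 1 - 1 = n := by omega
  rw [hn]
  have h2 : ∀ r ∈ range n, n + 1 - (1 + r) = n - r := by intro r hr; omega
  rw [Finset.prod_congr rfl h2]
  have h3 := Finset.prod_range_reflect (fun j => j + 1) n
  have h4 : ∀ r ∈ range n, n - r = n - 1 - r + 1 := by
    intro r hr; simp [mem_range] at hr; omega
  rw [Finset.prod_congr rfl h4, h3, Finset.prod_range_add_one_eq_factorial]

-- ∏_{j ∈ Icc 1 n} j = n !
lemma prod_Icc_factorial (n : ℕ) : ∏ j ∈ Icc 1 n, j = n.factorial := by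
  have h : Icc 1 n = Ico 1 (n+1) := by ext a; simp [Nat.lt_succ_iff]
  rw [h]; exact Finset.prod_Ico_id_eq_factorial n


lemma prodB (K i : ℕ) (hi1 : 1 ≤ i) (hiK : i ≤ K) :
    ∏ j ∈ (Icc 1 K).erase i, ((j:ℝ)^2 / |(i:ℝ)^2 - (j:ℝ)^2|) ≤ 2 := by
  have hiMem : i ∈ Icc 1 K := by simp [mem_Icc]; omega
  -- ℕ facts
  have hP1 : i * ∏ j ∈ (Icc 1 K).erase i, j = K.factorial := by
    have h := Finset.mul_prod_erase (Icc 1 K) (fun j => j) hiMem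
    simpa [prod_Icc_factorial K] using h
  have hP3a : (i + i) * ∏ j ∈ (Icc 1 K).erase i, (i + j) = ∏ j ∈ Icc 1 K, (i + j) :=
    Finset.mul_prod_erase (Icc 1 K) (fun j => i + j) hiMem
  have hP3b : i.factorial * ∏ j ∈ Icc 1 K, (i + j) = (i + K).factorial := prod_shift i K
  have hsplit : (Icc 1 K).erase i = Icc 1 (i-1) ∪ Icc (i+1) K := by
    ext a; simp [mem_erase, mem_Icc, mem_union]; omega
  have hdisj : Disjoint (Icc 1 (i-1)) (Icc (i+1) K) := by
    simp [Finset.disjoint_left, mem_Icc]; omega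
  have hS1 : ∏ j ∈ Icc 1 (i-1), (i - j) = (i-1).factorial := by
    have h : ∀ j ∈ Icc 1 (i-1), i - j = (i-1) + 1 - j := by intro j hj; omega
    rw [Finset.prod_congr rfl h, prod_reflect]
  have hS2 : ∏ j ∈ Icc (i+1) K, (j - i) = (K-i).factorial := by
    have h : Icc (i+1) K = Ico (i+1) (K+1) := by ext a; simp [Nat.lt_succ_iff]
    rw [h, Finset.prod_Ico_eq_prod_range]
    have h2 : ∀ r ∈ range (K + 1 - (i+1)), i + 1 + r - i = r + 1 := by intro r hr; omega
    rw [Finset.prod_congr rfl h2, Finset.prod_range_add_one_eq_factorial]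
    congr 1; omega
  -- ℝ level
  have hj1 : ∀ j ∈ (Icc 1 K).erase i, 1 ≤ j := by
    intro j hj; simp [mem_erase, mem_Icc] at hj; omega
  have habs : ∀ j ∈ (Icc 1 K).erase i, (j:ℝ)^2 / |(i:ℝ)^2 - (j:ℝ)^2|
      = (j:ℝ)^2 / (|(i:ℝ) - (j:ℝ)| * ((i:ℝ) + (j:ℝ))) := by
    intro j hj
    have h3 : (i:ℝ)^2 - (j:ℝ)^2 = ((i:ℝ) - j) * ((i:ℝ) + j) := by ring
    have h4 : |(i:ℝ) + (j:ℝ)| = (i:ℝ) + (j:ℝ) :=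
      abs_of_pos (by have := hj1 j hj; have : (1:ℝ) ≤ (j:ℝ) := by exact_mod_cast this
                     have : (0:ℝ) ≤ (i:ℝ) := by positivity
                     linarith)
    rw [h3, abs_mul, h4]
  rw [Finset.prod_congr rfl habs, Finset.prod_div_distrib, Finset.prod_mul_distrib]
  set A := ∏ j ∈ (Icc 1 K).erase i, (j:ℝ) with hA
  have hAsq : ∏ j ∈ (Icc 1 K).erase i, (j:ℝ)^2 = A^2 := by rw [hA, ← Finset.prod_pow]
  have hApos : 0 < A := Finset.prod_pos (fun j hj => by
    have h1 : (1:ℝ) ≤ (j:ℝ) := by exact_mod_cast hj1 j hj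
    linarith)
  set B := ∏ j ∈ (Icc 1 K).erase i, |(i:ℝ) - (j:ℝ)| with hB
  set Cp := ∏ j ∈ (Icc 1 K).erase i, ((i:ℝ) + (j:ℝ)) with hCp
  have hBval : B = (((i-1).factorial * (K-i).factorial : ℕ) : ℝ) := by
    rw [hB, hsplit, Finset.prod_union hdisj]
    have e1 : ∏ j ∈ Icc 1 (i-1), |(i:ℝ) - (j:ℝ)| = (((i-1).factorial : ℕ) : ℝ) := by
      rw [← hS1, Nat.cast_prod]
      apply Finset.prod_congr rfl
      intro j hj; simp [mem_Icc] at hj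
      have hji : j ≤ i := by omega
      rw [abs_of_nonneg (sub_nonneg.mpr (by exact_mod_cast hji)), Nat.cast_sub hji]
    have e2 : ∏ j ∈ Icc (i+1) K, |(i:ℝ) - (j:ℝ)| = (((K-i).factorial : ℕ) : ℝ) := by
      rw [← hS2, Nat.cast_prod]
      apply Finset.prod_congr rfl
      intro j hj; simp [mem_Icc] at hj
      have hji : i ≤ j := by omega
      rw [abs_of_nonpos (sub_nonpos.mpr (by exact_mod_cast hji)), neg_sub, Nat.cast_sub hji]
    rw [e1, e2]; push_cast; ring
  have hCval : ((i:ℝ) + (i:ℝ)) * Cp = ∏ j ∈ Icc 1 K, ((i:ℝ) + (j:ℝ)) := by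
    have h := congrArg (fun m : ℕ => (m:ℝ)) hP3a
    push_cast at h
    rw [hCp]; exact h
  have hCval2 : ((i.factorial : ℕ) : ℝ) * ∏ j ∈ Icc 1 K, ((i:ℝ) + (j:ℝ)) = (((i+K).factorial : ℕ) : ℝ) := by
    have h := congrArg (fun m : ℕ => (m:ℝ)) hP3b
    push_cast at h
    exact h
  have hAval : (i:ℝ) * A = ((K.factorial : ℕ) : ℝ) := by
    have h := congrArg (fun m : ℕ => (m:ℝ)) hP1
    push_cast at h
    rw [hA]; exact h
  have hBpos : 0 < B := by rw [hBval]; positivity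
  have hCpos : 0 < Cp := Finset.prod_pos (fun j hj => by
    have h1 : (1:ℝ) ≤ (j:ℝ) := by exact_mod_cast hj1 j hj
    have h2 : (0:ℝ) ≤ (i:ℝ) := by positivity
    linarith)
  rw [hAsq, div_le_iff₀ (by positivity)]
  have hfactR : ((K.factorial : ℕ) : ℝ)^2 ≤ (((K-i).factorial : ℕ) : ℝ) * (((K+i).factorial : ℕ) : ℝ) := by
    exact_mod_cast fact_sq_le K i hiK
  have hIpos : (0:ℝ) < (i:ℝ) := by exact_mod_cast hi1
  have hifac : ((i.factorial : ℕ) : ℝ) = (i:ℝ) * (((i-1).factorial : ℕ) : ℝ) := by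
    conv_lhs => rw [show i = (i-1)+1 by omega]
    rw [Nat.factorial_succ]
    push_cast [Nat.cast_sub hi1]
    ring
  have hKi : (K + i) = (i + K) := by omega
  have hbig : ((i:ℝ) * A)^2 ≤ 2 * (i:ℝ)^2 * (B * Cp) := by
    rw [hAval]
    calc ((K.factorial : ℕ) : ℝ)^2 ≤ (((K-i).factorial : ℕ) : ℝ) * (((K+i).factorial : ℕ) : ℝ) := hfactR
      _ = (((K-i).factorial : ℕ) : ℝ) * (((i.factorial : ℕ) : ℝ) * (((i:ℝ) + i) * Cp)) := by
          rw [hKi, ← hCval2, hCval]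
      _ = 2 * (i:ℝ)^2 * (B * Cp) := by rw [hifac, hBval]; push_cast; ring
  have hbig2 : (i:ℝ)^2 * A^2 ≤ (i:ℝ)^2 * (2 * (B * Cp)) := by nlinarith [hbig]
  exact le_of_mul_le_mul_left hbig2 (by positivity)


set_option maxHeartbeats 1000000 in
lemma construction (n M K : ℕ) (hM2 : 2 ≤ M) (hn1 : 1 ≤ n) (hKM : K^2 * M ≤ n)
    (L : ℝ) (hL0 : 1/2 < L) (hL1 : L < 1) (hM8 : 8/(1-L) ≤ (M:ℝ) - 1) :
    ∃ P : Polynomial ℂ, P ≠ 0 ∧ P.natDegree ≤ n ∧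
      ‖P.coeff 0‖ ≥ L * ∑ j ∈ Finset.Icc 1 n, ‖P.coeff j‖ ∧
      (X - 1) ^ (K+1) ∣ P := by
  have hε : 0 < 1 - L := by linarith
  have hεhalf : 1 - L < 1/2 := by linarith
  have hMR : (2:ℝ) ≤ (M:ℝ) := by exact_mod_cast hM2
  -- basic defs
  obtain ⟨t, htdef⟩ : ∃ t : ℕ → ℕ, t = fun a => if a = 0 then 1 else a^2 * M := ⟨_, rfl⟩
  obtain ⟨v, hvdef⟩ : ∃ v : ℕ → ℝ, v = fun a => (t a : ℝ) := ⟨_, rfl⟩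
  obtain ⟨sf, hsfdef⟩ : ∃ sf : Finset ℕ, sf = Finset.range (K+1) := ⟨_, rfl⟩
  obtain ⟨c, hcdef⟩ : ∃ c : ℕ → ℝ, c = fun a => (Lagrange.basis sf v a).eval 0 := ⟨_, rfl⟩
  obtain ⟨P, hPdef⟩ : ∃ P : Polynomial ℝ, P = C 1 - ∑ a ∈ sf, C (c a) * X ^ (t a) := ⟨_, rfl⟩
  -- facts about t
  have ht0 : t 0 = 1 := by simp [htdef]
  have hti : ∀ a, a ≠ 0 → t a = a^2 * M := by intro a ha; simp [htdef, ha]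
  have ht_ge : ∀ a, 1 ≤ t a := by
    intro a
    rcases eq_or_ne a 0 with h | h
    · simp [h, ht0]
    · rw [hti a h]
      have h1 : 1 ≤ a := Nat.one_le_iff_ne_zero.mpr h
      have : 1 ≤ a^2 := Nat.one_le_pow _ _ (by omega)
      calc 1 ≤ 1 * M := by omega
        _ ≤ a^2 * M := Nat.mul_le_mul_right _ this
  have ht_le : ∀ a ∈ sf, t a ≤ n := by
    intro a ha
    rcases eq_or_ne a 0 with h | h
    · simp [h, ht0]; omega
    · rw [hti a h]
      simp [hsfdef, mem_range] at ha
      have haK : a ≤ K := by omega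
      calc a^2 * M ≤ K^2 * M := Nat.mul_le_mul_right _ (Nat.pow_le_pow_left haK 2)
        _ ≤ n := hKM
  have htinj : ∀ a b, t a = t b → a = b := by
    intro a b hab
    rcases eq_or_ne a 0 with h | h <;> rcases eq_or_ne b 0 with h' | h'
    · omega
    · exfalso
      rw [h, ht0, hti b h'] at hab
      have h1 : 1 ≤ b^2 := Nat.one_le_pow _ _ (by omega)
      have := Nat.mul_le_mul_right M h1
      omega
    · exfalso
      rw [h', ht0, hti a h] at hab
      have h1 : 1 ≤ a^2 := Nat.one_le_pow _ _ (by omega)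
      have := Nat.mul_le_mul_right M h1
      omega
    · rw [hti a h, hti b h'] at hab
      have hM0 : 0 < M := by omega
      have h2 : a^2 = b^2 := Nat.eq_of_mul_eq_mul_right hM0 hab
      exact Nat.pow_left_injective (by omega) h2
  have hinj : Set.InjOn v sf := by
    intro a _ b _ hab
    apply htinj
    simp only [hvdef] at hab
    exact_mod_cast hab
  have hcard : sf.card = K + 1 := by rw [hsfdef]; exact Finset.card_range _
  -- interpolation identity
  have hinterp : ∀ f : ℝ[X], f.natDegree ≤ K → f.eval 0 = ∑ a ∈ sf, f.eval (v a) * c a := by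
    intro f hdeg
    have hdeg' : f.degree < (sf.card : WithBot ℕ) := by
      rw [hcard]
      calc f.degree ≤ (f.natDegree : WithBot ℕ) := degree_le_natDegree
        _ < ((K+1 : ℕ) : WithBot ℕ) := by exact_mod_cast Nat.lt_succ_of_le hdeg
    have h := Lagrange.eq_interpolate hinj hdeg'
    conv_lhs => rw [h]
    rw [Lagrange.interpolate_apply, eval_finset_sum]
    apply Finset.sum_congr rfl
    intro a _
    rw [eval_mul, eval_C]
    simp only [hcdef]
  -- moments
  have hmom : ∀ i ≤ K, ∑ a ∈ sf, c a * ((t a).choose i : ℝ) = ((0:ℕ).choose i : ℝ) := by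
    intro i hi
    have hdeg : (descPochhammer ℝ i).natDegree ≤ K := by
      rw [descPochhammer_natDegree]; exact hi
    have hf := hinterp (descPochhammer ℝ i) hdeg
    have h0 : (descPochhammer ℝ i).eval (0:ℝ) = (((0:ℕ).descFactorial i : ℕ) : ℝ) := by
      have := descPochhammer_eval_eq_descFactorial ℝ 0 i
      simpa using this
    have ha : ∀ a, (descPochhammer ℝ i).eval (v a) = (((t a).descFactorial i : ℕ) : ℝ) := by
      intro a
      simp only [hvdef]
      exact descPochhammer_eval_eq_descFactorial ℝ (t a) i
    rw [h0] at hf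
    rw [Finset.sum_congr rfl (fun a _ => by rw [ha a])] at hf
    -- hf : (0.descFactorial i : ℝ) = ∑ a, (t a).descFactorial i * c a
    have hfac : ∀ m : ℕ, ((m.descFactorial i : ℕ) : ℝ) = (i.factorial : ℝ) * (m.choose i : ℝ) := by
      intro m
      rw [Nat.descFactorial_eq_factorial_mul_choose]
      push_cast
      ring
    rw [hfac] at hf
    rw [Finset.sum_congr rfl (fun a _ => by rw [hfac (t a)])] at hf
    have hifne : (i.factorial : ℝ) ≠ 0 := by
      exact_mod_cast Nat.factorial_ne_zero i
    apply mul_left_cancel₀ hifne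
    rw [Finset.mul_sum]
    calc ∑ a ∈ sf, (i.factorial : ℝ) * (c a * ((t a).choose i : ℝ))
        = ∑ a ∈ sf, (i.factorial : ℝ) * ((t a).choose i : ℝ) * c a := by
          apply Finset.sum_congr rfl; intro a _; ring
      _ = (i.factorial : ℝ) * ((0:ℕ).choose i : ℝ) := hf.symm
  -- taylor coefficients vanish
  have htay : ∀ i < K + 1, (Polynomial.taylor (1:ℝ) P).coeff i = 0 := by
    intro i hi
    rw [Polynomial.taylor_coeff, hPdef, map_sub, eval_sub, map_sum, eval_finset_sum]
    have h1 : (Polynomial.hasseDeriv i (C (1:ℝ))).eval 1 = ((0:ℕ).choose i : ℝ) := by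
      rw [← Polynomial.monomial_zero_left, Polynomial.hasseDeriv_monomial]
      simp [Polynomial.eval_monomial]
    have h2 : ∀ a, (Polynomial.hasseDeriv i (C (c a) * X ^ (t a))).eval 1
        = c a * ((t a).choose i : ℝ) := by
      intro a
      rw [Polynomial.C_mul_X_pow_eq_monomial, Polynomial.hasseDeriv_monomial]
      simp [Polynomial.eval_monomial]
      ring
    rw [h1, Finset.sum_congr rfl (fun a _ => h2 a), hmom i (Nat.lt_succ_iff.mp hi)]
    ring
  have hdvdR : (X - C (1:ℝ))^(K+1) ∣ P := dvd_of_taylor P 1 (K+1) htay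
  -- coefficients of P
  have hterm_coeff : ∀ a j, (C (c a) * X ^ (t a)).coeff j = if j = t a then c a else 0 := by
    intro a j
    rw [Polynomial.coeff_C_mul, Polynomial.coeff_X_pow]
    split <;> simp
  have hc0 : P.coeff 0 = 1 := by
    rw [hPdef, Polynomial.coeff_sub, Polynomial.finset_sum_coeff]
    rw [Finset.sum_congr rfl (fun a _ => hterm_coeff a 0)]
    have : ∀ a ∈ sf, (if 0 = t a then c a else 0) = 0 := by
      intro a _
      rw [if_neg]
      exact fun h => by have := ht_ge a; omega
    rw [Finset.sum_congr rfl this]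
    simp
  have hcoeffj : ∀ j, j ≠ 0 → P.coeff j = - ∑ a ∈ sf, (if j = t a then c a else 0) := by
    intro j hj
    rw [hPdef, Polynomial.coeff_sub, Polynomial.finset_sum_coeff]
    rw [Finset.sum_congr rfl (fun a _ => hterm_coeff a j)]
    rw [Polynomial.coeff_C, if_neg hj]
    ring
  -- sum of |coeff| bounded by sum |c a|
  have hsum_le : ∑ j ∈ Icc 1 n, |P.coeff j| ≤ ∑ a ∈ sf, |c a| := by
    have step1 : ∀ j ∈ Icc 1 n, |P.coeff j| ≤ ∑ a ∈ sf, (if j = t a then |c a| else 0) := by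
      intro j hj
      simp only [mem_Icc] at hj
      rw [hcoeffj j (by omega), abs_neg]
      calc |∑ a ∈ sf, (if j = t a then c a else 0)| ≤ ∑ a ∈ sf, |if j = t a then c a else 0| :=
            Finset.abs_sum_le_sum_abs _ _
        _ = ∑ a ∈ sf, (if j = t a then |c a| else 0) := by
            apply Finset.sum_congr rfl
            intro a _
            split <;> simp
    calc ∑ j ∈ Icc 1 n, |P.coeff j| ≤ ∑ j ∈ Icc 1 n, ∑ a ∈ sf, (if j = t a then |c a| else 0) :=
          Finset.sum_le_sum step1
      _ = ∑ a ∈ sf, ∑ j ∈ Icc 1 n, (if j = t a then |c a| else 0) := Finset.sum_comm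
      _ = ∑ a ∈ sf, |c a| := by
          apply Finset.sum_congr rfl
          intro a ha
          have hmem : t a ∈ Icc 1 n := by rw [mem_Icc]; exact ⟨ht_ge a, ht_le a ha⟩
          rw [Finset.sum_ite_eq' (Icc 1 n) (t a) (fun _ => |c a|), if_pos hmem]
  -- estimates on c
  have hMpos : (0:ℝ) < (M:ℝ) := by linarith
  have herase0 : sf.erase 0 = Icc 1 K := by
    ext a; simp [hsfdef, mem_erase, mem_range, mem_Icc]; omega
  have hbasis_eval : ∀ a, c a = ∏ b ∈ sf.erase a, ((v a - v b)⁻¹ * (0 - v b)) := by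
    intro a
    simp only [hcdef]
    rw [Lagrange.basis, Polynomial.eval_prod]
    apply Finset.prod_congr rfl
    intro b _
    simp [Lagrange.basisDivisor]
  obtain ⟨w, hwdef⟩ : ∃ w : ℕ → ℝ, w = fun i : ℕ => (i:ℝ)^2 * (M:ℝ) - 1 :=
    ⟨fun i : ℕ => (i:ℝ)^2 * (M:ℝ) - 1, rfl⟩
  have hw1 : ∀ i : ℕ, 1 ≤ i → 1 ≤ w i := by
    intro i hi
    have h1 : (1:ℝ) ≤ (i:ℝ) := by exact_mod_cast hi
    simp only [hwdef]
    nlinarith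
  have hvv : ∀ b : ℕ, b ≠ 0 → v b = (b:ℝ)^2 * (M:ℝ) := by
    intro b hb
    simp only [hvdef, hti b hb]
    push_cast
    ring
  obtain ⟨S, hSdef⟩ : ∃ S : ℝ, S = ∑ i ∈ Icc 1 K, (w i)⁻¹ := ⟨_, rfl⟩
  have hSpos : 0 ≤ S := by
    rw [hSdef]
    apply Finset.sum_nonneg
    intro i hi
    simp [mem_Icc] at hi
    have := hw1 i (by omega)
    positivity
  have hS4 : S ≤ (1 - L)/4 := by
    rw [hSdef]
    have step1 : ∀ i ∈ Icc 1 K, (w i)⁻¹ ≤ ((i:ℝ)^2)⁻¹ * ((M:ℝ)-1)⁻¹ := by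
      intro i hi
      simp [mem_Icc] at hi
      have h1 : (1:ℝ) ≤ (i:ℝ) := by exact_mod_cast hi.1
      rw [← mul_inv]
      apply inv_anti₀ (by nlinarith)
      simp only [hwdef]
      nlinarith
    have hM1 : (0:ℝ) < (M:ℝ) - 1 := by linarith
    calc ∑ i ∈ Icc 1 K, (w i)⁻¹ ≤ ∑ i ∈ Icc 1 K, ((i:ℝ)^2)⁻¹ * ((M:ℝ)-1)⁻¹ := Finset.sum_le_sum step1
      _ = (∑ i ∈ Icc 1 K, ((i:ℝ)^2)⁻¹) * ((M:ℝ)-1)⁻¹ := by rw [Finset.sum_mul]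
      _ ≤ 2 * ((M:ℝ)-1)⁻¹ := by
          apply mul_le_mul_of_nonneg_right (sum_inv_sq K) (by positivity)
      _ ≤ 2 * (8/(1-L))⁻¹ := by
          apply mul_le_mul_of_nonneg_left _ (by norm_num)
          apply inv_anti₀ (by positivity) hM8
      _ = (1 - L)/4 := by
          rw [inv_div]
          ring
  have hS18 : S ≤ 1/8 := by linarith
  have hc0b : |c 0| ≤ (1 - S)⁻¹ := by
    have h1 : c 0 = ∏ b ∈ Icc 1 K, (1 + (w b)⁻¹) := by
      rw [hbasis_eval 0, herase0]
      apply Finset.prod_congr rfl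
      intro b hb
      simp [mem_Icc] at hb
      have hb0 : b ≠ 0 := by omega
      have hv0 : v 0 = 1 := by simp [hvdef, ht0]
      rw [hv0, hvv b hb0]
      have hwb := hw1 b hb.1
      have hx : (b:ℝ)^2 * (M:ℝ) - 1 ≠ 0 := by
        simp only [hwdef] at hwb; intro hc; rw [hc] at hwb; norm_num at hwb
      have hx2 : 1 - (b:ℝ)^2 * (M:ℝ) ≠ 0 := by
        intro hc; apply hx; linarith
      simp only [hwdef]
      field_simp
      ring
    rw [h1]
    have h2 : ∀ b ∈ Icc 1 K, 0 ≤ (w b)⁻¹ := by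
      intro b hb
      simp [mem_Icc] at hb
      have := hw1 b hb.1
      positivity
    have h3 : ∑ b ∈ Icc 1 K, (w b)⁻¹ < 1 := by rw [← hSdef]; linarith
    have := prod_one_add_le (Icc 1 K) (fun b => (w b)⁻¹) h2 h3
    rw [← hSdef] at this
    rw [abs_of_nonneg (Finset.prod_nonneg (fun b hb => by
      have := h2 b hb; linarith))]
    exact this
  have hcib : ∀ i ∈ Icc 1 K, |c i| ≤ 2 * (w i)⁻¹ := by
    intro i hi
    simp only [mem_Icc] at hi
    have hi1 : 1 ≤ i := hi.1
    have hiK : i ≤ K := hi.2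
    have hii : i ≠ 0 := by omega
    have hwi := hw1 i hi1
    have habsc : |c i| = ∏ b ∈ sf.erase i, (v b / |v i - v b|) := by
      rw [hbasis_eval i, Finset.abs_prod]
      apply Finset.prod_congr rfl
      intro b hb
      rw [abs_mul, abs_inv]
      have hvb : 0 ≤ v b := by
        simp only [hvdef]
        positivity
      rw [show (0:ℝ) - v b = -(v b) by ring, abs_neg, abs_of_nonneg hvb]
      rw [div_eq_mul_inv]
      ring
    have hsplit2 : sf.erase i = insert 0 ((Icc 1 K).erase i) := by
      ext a; simp [hsfdef, mem_erase, mem_range, mem_insert, mem_Icc]; omega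
    have h0notin : 0 ∉ (Icc 1 K).erase i := by simp [mem_erase, mem_Icc]
    rw [habsc, hsplit2, Finset.prod_insert h0notin]
    have hv0 : v 0 = 1 := by simp [hvdef, ht0]
    have hfirst : v 0 / |v i - v 0| = (w i)⁻¹ := by
      rw [hv0, hvv i hii]
      rw [abs_of_pos (by simp only [hwdef] at hwi; nlinarith)]
      simp only [hwdef]
      rw [one_div]
    have hrest : ∏ j ∈ (Icc 1 K).erase i, (v j / |v i - v j|)
        = ∏ j ∈ (Icc 1 K).erase i, ((j:ℝ)^2 / |(i:ℝ)^2 - (j:ℝ)^2|) := by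
      apply Finset.prod_congr rfl
      intro j hj
      simp [mem_erase, mem_Icc] at hj
      have hj0 : j ≠ 0 := by omega
      rw [hvv i hii, hvv j hj0]
      rw [show (i:ℝ)^2 * (M:ℝ) - (j:ℝ)^2 * (M:ℝ) = ((i:ℝ)^2 - (j:ℝ)^2) * (M:ℝ) by ring]
      rw [abs_mul, abs_of_pos hMpos]
      rw [mul_div_mul_right _ _ (ne_of_gt hMpos)]
    rw [hfirst, hrest]
    have hprod := prodB K i hi1 hiK
    have hprodpos : 0 ≤ ∏ j ∈ (Icc 1 K).erase i, ((j:ℝ)^2 / |(i:ℝ)^2 - (j:ℝ)^2|) := by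
      apply Finset.prod_nonneg
      intro j hj
      positivity
    have hwipos : (0:ℝ) < (w i)⁻¹ := by positivity
    calc (w i)⁻¹ * ∏ j ∈ (Icc 1 K).erase i, ((j:ℝ)^2 / |(i:ℝ)^2 - (j:ℝ)^2|)
        ≤ (w i)⁻¹ * 2 := by
          apply mul_le_mul_of_nonneg_left hprod (le_of_lt hwipos)
      _ = 2 * (w i)⁻¹ := by ring
  have htail : ∑ a ∈ sf, |c a| ≤ (1 - S)⁻¹ + 2 * S := by
    have hsf2 : sf = insert 0 (Icc 1 K) := by
      ext a; simp [hsfdef, mem_range, mem_insert, mem_Icc]; omega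
    rw [hsf2, Finset.sum_insert (by simp [mem_Icc])]
    apply add_le_add hc0b
    calc ∑ i ∈ Icc 1 K, |c i| ≤ ∑ i ∈ Icc 1 K, 2 * (w i)⁻¹ := Finset.sum_le_sum hcib
      _ = 2 * S := by rw [hSdef, Finset.mul_sum]
  have hLbound : L * ∑ a ∈ sf, |c a| ≤ 1 := by
    have h1S : (0:ℝ) < 1 - S := by linarith
    have hinv : (1 - S)⁻¹ ≤ 1 + 2 * S := by
      rw [inv_eq_one_div, div_le_iff₀ h1S]
      nlinarith
    have htail2 : ∑ a ∈ sf, |c a| ≤ 1 + 4 * S := by linarith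
    have hcabs_nonneg : 0 ≤ ∑ a ∈ sf, |c a| :=
      Finset.sum_nonneg (fun a _ => abs_nonneg _)
    calc L * ∑ a ∈ sf, |c a| ≤ L * (1 + 4 * S) := by
          apply mul_le_mul_of_nonneg_left htail2 (by linarith)
      _ ≤ 1 := by nlinarith
  -- packaging
  refine ⟨P.map (algebraMap ℝ ℂ), ?_, ?_, ?_, ?_⟩
  · intro h
    have h0 := congrArg (fun q : Polynomial ℂ => q.coeff 0) h
    simp only [Polynomial.coeff_map, hc0, Polynomial.coeff_zero] at h0
    rw [map_one] at h0
    exact one_ne_zero h0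
  · apply le_trans Polynomial.natDegree_map_le
    rw [hPdef]
    apply le_trans (Polynomial.natDegree_sub_le _ _)
    rw [sup_le_iff]
    constructor
    · rw [Polynomial.natDegree_C]; omega
    · apply Polynomial.natDegree_sum_le_of_forall_le
      intro a ha
      exact le_trans (Polynomial.natDegree_C_mul_X_pow_le _ _) (ht_le a ha)
  · have habs0 : ‖(P.map (algebraMap ℝ ℂ)).coeff 0‖ = 1 := by
      rw [Polynomial.coeff_map, hc0]
      rw [map_one, norm_one]
    have hsumeq : ∑ j ∈ Icc 1 n, ‖(P.map (algebraMap ℝ ℂ)).coeff j‖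
        = ∑ j ∈ Icc 1 n, |P.coeff j| := by
      apply Finset.sum_congr rfl
      intro j _
      rw [Polynomial.coeff_map]
      rw [show (algebraMap ℝ ℂ) (P.coeff j) = ((P.coeff j : ℝ) : ℂ) by
        rw [Complex.coe_algebraMap]]
      rw [Complex.norm_real, Real.norm_eq_abs]
    rw [habs0, hsumeq, ge_iff_le]
    calc L * ∑ j ∈ Icc 1 n, |P.coeff j| ≤ L * ∑ a ∈ sf, |c a| := by
          apply mul_le_mul_of_nonneg_left hsum_le (by linarith)
      _ ≤ 1 := hLbound
  · have hmap := Polynomial.map_dvd (algebraMap ℝ ℂ) hdvdR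
    have heq : (Polynomial.map (algebraMap ℝ ℂ) ((X - C (1:ℝ))^(K+1)))
        = (X - 1 : Polynomial ℂ)^(K+1) := by
      rw [Polynomial.map_pow, Polynomial.map_sub, Polynomial.map_X, Polynomial.map_C]
      simp
    rw [heq] at hmap
    exact hmap


theorem stmt4 (n : ℕ) (L : ℝ) (hL0 : 1/2 < L) (hL : L ≤ 1) :
    ∃ P : Polynomial ℂ, P ≠ 0 ∧ P.natDegree ≤ n ∧
      ‖P.coeff 0‖ ≥ L * ∑ j ∈ Finset.Icc 1 n, ‖P.coeff j‖ ∧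
      ∃ k : ℕ, (k : ℝ) ≥ (1/5) * Real.sqrt (n * (1 - L)) - 1 ∧ (X - 1) ^ k ∣ P := by
  by_cases hcase : n = 0 ∨ L = 1
  · refine ⟨1, one_ne_zero, by simp, ?_, 0, ?_, one_dvd _⟩
    · have hz : ∀ j ∈ Icc 1 n, ‖(1 : Polynomial ℂ).coeff j‖ = 0 := by
        intro j hj
        simp only [mem_Icc] at hj
        rw [Polynomial.coeff_one, if_neg (by omega)]
        simp
      rw [Finset.sum_congr rfl hz, Finset.sum_const, smul_zero, mul_zero]
      rw [Polynomial.coeff_one, if_pos rfl]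
      simp
    · have h0 : (n:ℝ) * (1 - L) = 0 := by
        rcases hcase with h | h
        · rw [h]; simp
        · rw [h]; ring
      rw [h0, Real.sqrt_zero]
      norm_num
  · push_neg at hcase
    obtain ⟨hn0, hL1'⟩ := hcase
    have hn1 : 1 ≤ n := Nat.one_le_iff_ne_zero.mpr hn0
    have hL1 : L < 1 := lt_of_le_of_ne hL hL1'
    have hε : 0 < 1 - L := by linarith
    have hεhalf : 1 - L < 1/2 := by linarith
    set M : ℕ := 1 + ⌈(8:ℝ)/(1-L)⌉₊ with hMdef
    have hMlow : (8:ℝ)/(1-L) ≤ (M:ℝ) - 1 := by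
      have h := Nat.le_ceil ((8:ℝ)/(1-L))
      rw [hMdef]
      push_cast
      linarith
    have hM2 : 2 ≤ M := by
      have h : 0 < ⌈(8:ℝ)/(1-L)⌉₊ := Nat.ceil_pos.mpr (by positivity)
      omega
    have hMup : (M:ℝ) ≤ 9/(1-L) := by
      have h1 : (⌈(8:ℝ)/(1-L)⌉₊ : ℝ) < 8/(1-L) + 1 := Nat.ceil_lt_add_one (by positivity)
      have h3 : (2:ℝ) ≤ 1/(1-L) := by rw [le_div_iff₀ hε]; linarith
      have h4 : (1:ℝ)/(1-L) + 8/(1-L) = 9/(1-L) := by ring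
      rw [hMdef]
      push_cast
      linarith
    set K := Nat.sqrt (n / M) with hKdef
    have hKM : K^2 * M ≤ n := by
      have h1 : K^2 ≤ n / M := Nat.sqrt_le' (n / M)
      calc K^2 * M ≤ (n/M) * M := Nat.mul_le_mul_right _ h1
        _ ≤ n := Nat.div_mul_le_self n M
    obtain ⟨P, h1, h2, h3, h4⟩ := construction n M K hM2 hn1 hKM L hL0 hL1 hMlow
    refine ⟨P, h1, h2, h3, K+1, ?_, h4⟩
    have hMpos : 0 < M := by omega
    have hMRpos : (0:ℝ) < (M:ℝ) := by exact_mod_cast hMpos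
    have hdivlt : (n : ℝ) < (((n / M : ℕ) : ℝ) + 1) * (M:ℝ) := by
      have hmod := Nat.div_add_mod n M
      have hlt := Nat.mod_lt n hMpos
      have hcast : (n:ℝ) = (M:ℝ) * ((n / M : ℕ) : ℝ) + ((n % M : ℕ) : ℝ) := by
        exact_mod_cast congrArg (fun m : ℕ => (m:ℝ)) hmod.symm
      have hcast2 : ((n % M : ℕ) : ℝ) < (M:ℝ) := by exact_mod_cast hlt
      nlinarith
    have hsqnat : n / M < (K+1)^2 := by
      rw [hKdef]
      exact Nat.lt_succ_sqrt' (n / M)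
    have hsq : ((n / M : ℕ) : ℝ) + 1 ≤ ((K:ℝ)+1)^2 := by
      have : (n / M) + 1 ≤ (K+1)^2 := hsqnat
      exact_mod_cast this
    have hML : (1 - L) * (M:ℝ) ≤ 9 := by
      rw [div_eq_mul_inv] at hMup
      calc (1-L) * (M:ℝ) ≤ (1-L) * (9 * (1-L)⁻¹) := by
            apply mul_le_mul_of_nonneg_left _ (le_of_lt hε)
            rw [← div_eq_mul_inv]
            exact hMup
        _ = 9 := by field_simp
    have hbound : (n:ℝ) * (1 - L) < 9 * ((K:ℝ)+1)^2 := by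
      calc (n:ℝ) * (1-L) < ((((n / M : ℕ) : ℝ) + 1) * (M:ℝ)) * (1-L) := by
            apply mul_lt_mul_of_pos_right hdivlt hε
        _ = (((n / M : ℕ) : ℝ) + 1) * ((1-L) * (M:ℝ)) := by ring
        _ ≤ (((n / M : ℕ) : ℝ) + 1) * 9 := by
            apply mul_le_mul_of_nonneg_left hML (by positivity)
        _ ≤ ((K:ℝ)+1)^2 * 9 := by
            apply mul_le_mul_of_nonneg_right hsq (by norm_num)
        _ = 9 * ((K:ℝ)+1)^2 := by ring
    have hsqrt : Real.sqrt ((n:ℝ) * (1-L)) ≤ 3*((K:ℝ)+1) := by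
      rw [show (3*((K:ℝ)+1)) = Real.sqrt ((3*((K:ℝ)+1))^2) by
        rw [Real.sqrt_sq (by positivity)]]
      apply Real.sqrt_le_sqrt
      nlinarith
    rw [ge_iff_le]
    push_cast
    nlinarith [Real.sqrt_nonneg ((n:ℝ) * (1-L))]
end

section
/- For every n ∈ ℕ, every real L with 1/2 < L ≤ 1, every nonzero polynomial P(x) = Σ_{j=0}^n a_j x^j with complex coefficients satisfying |a_0| ≥ L·Σ_{j=1}^n |a_j|, and every nonnegative integer k such that (x−1)^k divides P(x), one has k ≤ √(n(1−L)) + 1. -/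
open Polynomial

/-- Chebyshev-like polynomials (ℕ-indexed, over ℝ). -/
private noncomputable def cheb5 : ℕ → Polynomial ℝ
  | 0 => 1
  | 1 => X
  | (n+2) => 2 * X * cheb5 (n+1) - cheb5 n

private theorem cheb5_natDegree_le : ∀ n : ℕ, (cheb5 n).natDegree ≤ n
  | 0 => by simp [cheb5]
  | 1 => by simp [cheb5]
  | (n+2) => by
    have h1 := cheb5_natDegree_le (n+1)
    have h0 := cheb5_natDegree_le n
    rw [cheb5]
    apply le_trans (natDegree_sub_le _ _)
    have : (2 * X * cheb5 (n+1)).natDegree ≤ n + 2 := by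
      apply le_trans (natDegree_mul_le)
      have : (2 * X : Polynomial ℝ).natDegree ≤ 1 := by
        apply le_trans (natDegree_mul_le); simp
      omega
    omega

private theorem cheb5_eval_cos : ∀ (n : ℕ) (θ : ℝ),
    (cheb5 n).eval (Real.cos θ) = Real.cos (n * θ)
  | 0, θ => by simp [cheb5]
  | 1, θ => by simp [cheb5]
  | (n+2), θ => by
    have h1 := cheb5_eval_cos (n+1) θ
    have h0 := cheb5_eval_cos n θ
    have key : Real.cos ((n+2) * θ) = 2 * Real.cos θ * Real.cos ((n+1) * θ) - Real.cos (n * θ) := by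
      have ha := Real.cos_add ((n+1) * θ) θ
      have hb := Real.cos_sub ((n+1) * θ) θ
      have e1 : ((n:ℝ)+1) * θ + θ = ((n:ℝ)+2) * θ := by ring
      have e2 : ((n:ℝ)+1) * θ - θ = (n:ℝ) * θ := by ring
      rw [e1] at ha; rw [e2] at hb; linarith
    rw [cheb5]
    push_cast
    simp [h1, h0]
    push_cast at key
    linarith

private theorem cheb5_abs_le (n : ℕ) (y : ℝ) (hy1 : -1 ≤ y) (hy2 : y ≤ 1) :
    |(cheb5 n).eval y| ≤ 1 := by
  have : y = Real.cos (Real.arccos y) := (Real.cos_arccos hy1 hy2).symm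
  rw [this, cheb5_eval_cos]
  exact Real.abs_cos_le_one _

private theorem cheb5_growth : ∀ (n : ℕ), ∀ x : ℝ, 1 ≤ x →
    1 + n^2 * (x - 1) ≤ (cheb5 n).eval x ∧
    (2*n+1) * (x-1) ≤ (cheb5 (n+1)).eval x - (cheb5 n).eval x
  | 0 => by intro x hx; constructor <;> simp [cheb5] <;> linarith
  | (n+1) => by
    intro x hx
    obtain ⟨hA, hD⟩ := cheb5_growth n x hx
    have hA1 : 1 + ((n:ℝ)+1)^2 * (x-1) ≤ (cheb5 (n+1)).eval x := by push_cast; nlinarith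
    refine ⟨by push_cast; linarith, ?_⟩
    have hrec : (cheb5 (n+2)).eval x = 2 * x * (cheb5 (n+1)).eval x - (cheb5 n).eval x := by
      rw [cheb5]; simp
    rw [hrec]
    push_cast
    nlinarith [mul_le_mul_of_nonneg_left hA1 (by linarith : (0:ℝ) ≤ 2*(x-1)), sq_nonneg (x-1)]

private theorem theta5_coeff (p : Polynomial ℂ) (j : ℕ) :
    (X * derivative p).coeff j = (j : ℂ) * p.coeff j := by
  cases j with
  | zero => simp
  | succ j => rw [coeff_X_mul, coeff_derivative]; push_cast; ring

private theorem theta5_iter_coeff (i : ℕ) (p : Polynomial ℂ) (j : ℕ) :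
    ((fun q => X * derivative q)^[i] p).coeff j = (j : ℂ)^i * p.coeff j := by
  induction i generalizing p with
  | zero => simp
  | succ i ih =>
    rw [Function.iterate_succ_apply, ih, theta5_coeff]
    ring

private theorem theta5_dvd (s : ℕ) (p : Polynomial ℂ)
    (h : (X - 1)^(s+1) ∣ p) : (X - 1)^s ∣ X * derivative p := by
  obtain ⟨r, rfl⟩ := h
  refine ⟨X * (((s:Polynomial ℂ)+1) * r + (X - 1) * derivative r), ?_⟩
  have : derivative ((X - 1 : Polynomial ℂ)^(s+1) * r)
      = ((s:Polynomial ℂ)+1) * (X-1)^s * r + (X-1)^(s+1) * derivative r := by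
    rw [derivative_mul, derivative_pow]
    simp
    try ring
  rw [this]
  ring

private theorem theta5_iter_dvd (k i : ℕ) (p : Polynomial ℂ) (hik : i ≤ k)
    (h : (X - 1)^k ∣ p) : (X - 1)^(k-i) ∣ (fun q => X * derivative q)^[i] p := by
  induction i with
  | zero => simpa using h
  | succ i ih =>
    rw [Function.iterate_succ_apply']
    have h1 : (X - 1 : Polynomial ℂ)^(k - i - 1 + 1) ∣ (fun q => X * derivative q)^[i] p := by
      have e : k - i - 1 + 1 = k - i := by omega
      rw [e]; exact ih (by omega)
    have h2 := theta5_dvd (k - i - 1) _ h1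
    have e : k - (i+1) = k - i - 1 := by omega
    rw [e]; exact h2

private theorem ortho5 (n k : ℕ) (P : Polynomial ℂ) (hPn : P.natDegree ≤ n)
    (hk : (X - 1)^k ∣ P) (i : ℕ) (hik : i < k) :
    ∑ j ∈ Finset.range (n+1), P.coeff j * (j : ℂ)^i = 0 := by
  set q := (fun q => X * derivative q)^[i] P with hq
  have hdvd : (X - 1 : Polynomial ℂ) ∣ q := by
    have := theta5_iter_dvd k i P (le_of_lt hik) hk
    exact dvd_trans (dvd_pow_self _ (by omega : k - i ≠ 0)) this
  have heval : q.eval 1 = 0 := by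
    obtain ⟨r, hr⟩ := hdvd
    rw [hr]; simp
  have hdeg : q.natDegree < n + 1 := by
    rw [Nat.lt_succ_iff]
    apply natDegree_le_iff_coeff_eq_zero.2
    intro j hj
    rw [hq, theta5_iter_coeff]
    rw [coeff_eq_zero_of_natDegree_lt (lt_of_le_of_lt hPn hj)]
    ring
  rw [eval_eq_sum_range' hdeg] at heval
  simp only [one_pow, mul_one] at heval
  rw [← heval]
  apply Finset.sum_congr rfl
  intro j _
  rw [hq, theta5_iter_coeff]
  ring

set_option maxHeartbeats 1000000 in
theorem stmt5 (n : ℕ) (L : ℝ) (hL0 : 1/2 < L) (hL : L ≤ 1)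
    (P : Polynomial ℂ) (hP0 : P ≠ 0) (hPn : P.natDegree ≤ n)
    (hcoeff : ‖P.coeff 0‖ ≥ L * ∑ j ∈ Finset.Icc 1 n, ‖P.coeff j‖)
    (k : ℕ) (hk : (X - 1) ^ k ∣ P) :
    (k : ℝ) ≤ Real.sqrt (n * (1 - L)) + 1 := by
  by_contra hcon
  push_neg at hcon
  have hLpos : 0 < L := by linarith
  have hsqrt_nonneg := Real.sqrt_nonneg ((n:ℝ) * (1 - L))
  -- k ≥ 2
  have hk2 : 2 ≤ k := by
    by_contra h
    interval_cases k <;> push_cast at hcon <;> linarith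
  -- a₀ ≠ 0
  have ha0 : P.coeff 0 ≠ 0 := by
    intro h0
    apply hP0
    have hS0 : ∀ j ∈ Finset.Icc 1 n, ‖P.coeff j‖ = 0 := by
      have hs : ∑ j ∈ Finset.Icc 1 n, ‖P.coeff j‖ ≤ 0 := by
        rw [h0] at hcoeff
        simp only [norm_zero] at hcoeff
        have hSnn : 0 ≤ ∑ j ∈ Finset.Icc 1 n, ‖P.coeff j‖ :=
          Finset.sum_nonneg fun j _ => norm_nonneg _
        nlinarith
      have := Finset.sum_eq_zero_iff_of_nonneg
        (fun j (_ : j ∈ Finset.Icc 1 n) => norm_nonneg (P.coeff j))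
      have hSnn : 0 ≤ ∑ j ∈ Finset.Icc 1 n, ‖P.coeff j‖ :=
        Finset.sum_nonneg fun j _ => norm_nonneg _
      exact this.mp (le_antisymm hs hSnn)
    ext j
    rcases Nat.lt_or_ge n j with hj | hj
    · simp [coeff_eq_zero_of_natDegree_lt (lt_of_le_of_lt hPn hj)]
    · rcases Nat.eq_zero_or_pos j with rfl | hjpos
      · simpa using h0
      · have := hS0 j (Finset.mem_Icc.mpr ⟨hjpos, hj⟩)
        simpa using (norm_eq_zero.mp this)
  -- k ≤ n
  have hkn : k ≤ n := by
    have hdeg := natDegree_le_of_dvd hk hP0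
    have h1 : ((X : Polynomial ℂ) - 1) = X - C 1 := by simp
    rw [h1, natDegree_pow, natDegree_X_sub_C, mul_one] at hdeg
    omega
  have hn2 : 2 ≤ n := le_trans hk2 hkn
  set m := k - 1 with hm
  have hm1 : 1 ≤ m := by omega
  set N := (n : ℝ) with hNdef
  have hN2 : (2:ℝ) ≤ N := by rw [hNdef]; exact_mod_cast hn2
  have hNpos : (0:ℝ) < N := by linarith
  have hden : (0:ℝ) < N - 1 := by linarith
  -- m² > n (1-L)
  have hmsq : N * (1 - L) < (m:ℝ)^2 := by
    have hmk : (m:ℝ) = (k:ℝ) - 1 := by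
      have : (k:ℝ) = ((m+1 : ℕ) : ℝ) := by norm_cast; omega
      rw [this]; push_cast; ring
    have h1 : Real.sqrt (N * (1 - L)) < (m:ℝ) := by rw [hmk]; linarith
    have h2 : (0:ℝ) ≤ N * (1 - L) := by
      apply mul_nonneg (le_of_lt hNpos); linarith
    nlinarith [Real.sq_sqrt h2, Real.sqrt_nonneg (N * (1 - L))]
  -- the test polynomial
  set σ1 : ℝ := (N + 1) / (N - 1) with hσ1
  set σ2 : ℝ := 2 / (N - 1) with hσ2
  set Q : Polynomial ℝ := (cheb5 m).comp (C σ1 - C σ2 * X) with hQdef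
  have hQdeg : Q.natDegree ≤ m := by
    apply le_trans natDegree_comp_le
    have hlin : (C σ1 - C σ2 * X).natDegree ≤ 1 := by
      apply le_trans (natDegree_sub_le _ _)
      have h1 : (C σ1 : Polynomial ℝ).natDegree = 0 := natDegree_C _
      have h2 : (C σ2 * X : Polynomial ℝ).natDegree ≤ 1 := by
        apply le_trans natDegree_mul_le
        simp
      omega
    calc (cheb5 m).natDegree * (C σ1 - C σ2 * X).natDegree
        ≤ m * 1 := Nat.mul_le_mul (cheb5_natDegree_le m) hlin
      _ = m := mul_one m
  have hQeval : ∀ t : ℝ, Q.eval t = (cheb5 m).eval (σ1 - σ2 * t) := by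
    intro t; rw [hQdef, eval_comp]; simp
  -- orthogonality
  have hQsum : ∑ j ∈ Finset.range (n+1), P.coeff j * ((Q.eval (j:ℝ) : ℝ) : ℂ) = 0 := by
    have hQd : Q.natDegree < m + 1 := Nat.lt_succ_of_le hQdeg
    have step1 : ∀ j : ℕ, P.coeff j * ((Q.eval (j:ℝ) : ℝ) : ℂ)
        = ∑ i ∈ Finset.range (m+1), ((Q.coeff i : ℝ) : ℂ) * (P.coeff j * (j:ℂ)^i) := by
      intro j
      rw [eval_eq_sum_range' hQd]
      push_cast
      rw [Finset.mul_sum]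
      apply Finset.sum_congr rfl
      intro i _
      ring
    calc ∑ j ∈ Finset.range (n+1), P.coeff j * ((Q.eval (j:ℝ) : ℝ) : ℂ)
        = ∑ j ∈ Finset.range (n+1), ∑ i ∈ Finset.range (m+1),
            ((Q.coeff i : ℝ) : ℂ) * (P.coeff j * (j:ℂ)^i) := by
          exact Finset.sum_congr rfl fun j _ => step1 j
      _ = ∑ i ∈ Finset.range (m+1), ((Q.coeff i : ℝ) : ℂ) *
            ∑ j ∈ Finset.range (n+1), P.coeff j * (j:ℂ)^i := by
          rw [Finset.sum_comm]
          exact Finset.sum_congr rfl fun i _ => by rw [Finset.mul_sum]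
      _ = 0 := by
          apply Finset.sum_eq_zero
          intro i hi
          rw [Finset.mem_range] at hi
          rw [ortho5 n k P hPn hk i (by omega), mul_zero]
  -- split off j = 0
  have hsplit : Finset.range (n+1) = insert 0 (Finset.Icc 1 n) := by
    ext x; simp [Nat.lt_succ_iff]; omega
  have h0notin : 0 ∉ Finset.Icc 1 n := by simp
  rw [hsplit, Finset.sum_insert h0notin] at hQsum
  set M : ℝ := (cheb5 m).eval σ1 with hMdef
  have hQ0 : Q.eval ((0:ℕ):ℝ) = M := by
    rw [Nat.cast_zero, hQeval]; simp [hMdef]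
  rw [hQ0] at hQsum
  -- lower bound on M
  have hσ1ge : (1:ℝ) ≤ σ1 := by
    rw [hσ1, le_div_iff₀ hden]; linarith
  have hσ1sub : (2:ℝ)/N ≤ σ1 - 1 := by
    have he : σ1 - 1 = 2 / (N - 1) := by
      rw [hσ1]; field_simp; ring
    rw [he, div_le_div_iff₀ hNpos hden]; linarith
  have hM : 1 + 2 * (m:ℝ)^2 / N ≤ M := by
    have hg := (cheb5_growth m σ1 hσ1ge).1
    have hmn : (0:ℝ) ≤ (m:ℝ)^2 := sq_nonneg _
    have h1 : (m:ℝ)^2 * (2/N) ≤ (m:ℝ)^2 * (σ1 - 1) := by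
      apply mul_le_mul_of_nonneg_left hσ1sub hmn
    have h2 : (m:ℝ)^2 * (2/N) = 2 * (m:ℝ)^2 / N := by ring
    linarith [hg]
  have hMpos : 0 < M := by
    have : (0:ℝ) ≤ 2 * (m:ℝ)^2 / N := by positivity
    linarith
  -- |Q(j)| ≤ 1 for 1 ≤ j ≤ n
  have habs : ∀ j ∈ Finset.Icc 1 n, ‖((Q.eval (j:ℝ) : ℝ) : ℂ)‖ ≤ 1 := by
    intro j hj
    rw [Finset.mem_Icc] at hj
    have hj1 : (1:ℝ) ≤ (j:ℝ) := by exact_mod_cast hj.1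
    have hjn : (j:ℝ) ≤ N := by rw [hNdef]; exact_mod_cast hj.2
    rw [Complex.norm_real, Real.norm_eq_abs, hQeval]
    apply cheb5_abs_le
    · have hy : σ1 - σ2 * (j:ℝ) = (N + 1 - 2*(j:ℝ)) / (N - 1) := by
        rw [hσ1, hσ2]; field_simp
      rw [hy, le_div_iff₀ hden]; linarith
    · have hy : σ1 - σ2 * (j:ℝ) = (N + 1 - 2*(j:ℝ)) / (N - 1) := by
        rw [hσ1, hσ2]; field_simp
      rw [hy, div_le_one hden]; linarith
  -- main estimate
  have key : ‖P.coeff 0‖ * M ≤ ∑ j ∈ Finset.Icc 1 n, ‖P.coeff j‖ := by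
    have hneg : P.coeff 0 * ((M:ℝ):ℂ) = - ∑ j ∈ Finset.Icc 1 n,
        P.coeff j * ((Q.eval (j:ℝ) : ℝ) : ℂ) := by
      linear_combination hQsum
    calc ‖P.coeff 0‖ * M
        = ‖P.coeff 0 * ((M:ℝ):ℂ)‖ := by
          rw [norm_mul, Complex.norm_real, Real.norm_eq_abs, abs_of_pos hMpos]
      _ = ‖∑ j ∈ Finset.Icc 1 n, P.coeff j * ((Q.eval (j:ℝ) : ℝ) : ℂ)‖ := by
          rw [hneg, norm_neg]
      _ ≤ ∑ j ∈ Finset.Icc 1 n, ‖P.coeff j * ((Q.eval (j:ℝ) : ℝ) : ℂ)‖ :=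
          norm_sum_le _ _
      _ ≤ ∑ j ∈ Finset.Icc 1 n, ‖P.coeff j‖ := by
          apply Finset.sum_le_sum
          intro j hj
          rw [norm_mul]
          have := habs j hj
          nlinarith [norm_nonneg (P.coeff j),
            norm_nonneg (((Q.eval (j:ℝ) : ℝ) : ℂ))]
  -- contradiction
  have hA : 0 < ‖P.coeff 0‖ := norm_pos_iff.mpr ha0
  have htpos : 0 < (m:ℝ)^2 / N := by positivity
  have ht : 1 - L < (m:ℝ)^2 / N := by
    rw [lt_div_iff₀ hNpos]; nlinarith
  have hML : 1 < M * L := by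
    have h1 : (1 + 2 * (m:ℝ)^2 / N) * L ≤ M * L :=
      mul_le_mul_of_nonneg_right hM (le_of_lt hLpos)
    have h2 : (m:ℝ)^2 / N < 2 * ((m:ℝ)^2 / N) * L := by
      have hp := mul_pos htpos (by linarith : (0:ℝ) < 2*L - 1)
      have he : 2 * ((m:ℝ)^2 / N) * L - (m:ℝ)^2 / N = ((m:ℝ)^2 / N) * (2*L - 1) := by ring
      linarith
    have h3 : (1 + 2 * (m:ℝ)^2 / N) * L = L + 2 * ((m:ℝ)^2 / N) * L := by ring
    linarith
  have hfin : ‖P.coeff 0‖ * (M * L) ≤ ‖P.coeff 0‖ := by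
    have h1 := mul_le_mul_of_nonneg_left key (le_of_lt hLpos)
    have h2 : ‖P.coeff 0‖ * (M * L) = L * (‖P.coeff 0‖ * M) := by ring
    linarith
  have hlast := mul_lt_mul_of_pos_left hML hA
  rw [mul_one] at hlast
  linarith
end

section
/- Let p, q ∈ (1,∞) satisfy 1/p + 1/q = 1, let n ∈ ℕ, L > 0, and let m be a nonnegative integer. Suppose Q is a polynomial with complex coefficients of degree at most m such that |Q(0)| > (1/L)·(Σ_{j=1}^n |Q(j)|^q)^{1/q}. Then for every nonzero polynomial P(x) = Σ_{j=0}^n a_j x^j with complex coefficients satisfying |a_0| ≥ L·(Σ_{j=1}^n |a_j|^p)^{1/p}, the polynomial (x−1)^{m+1} does not divide P(x). -/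
open Polynomial

noncomputable def TT (Q P : Polynomial ℂ) : ℂ :=
  P.sum (fun j a => a * Q.eval (j : ℂ))

noncomputable def DD (Q : Polynomial ℂ) : Polynomial ℂ :=
  Q.comp (X + C 1) - Q

lemma TT_add (Q P R : Polynomial ℂ) : TT Q (P + R) = TT Q P + TT Q R := by
  unfold TT
  apply Polynomial.sum_add_index
  · intro i; ring
  · intro a b₁ b₂; ring

lemma TT_monomial (Q : Polynomial ℂ) (k : ℕ) (a : ℂ) :
    TT Q (monomial k a) = a * Q.eval (k : ℂ) := by
  unfold TT
  apply Polynomial.sum_monomial_index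
  ring

lemma TT_step (Q P : Polynomial ℂ) : TT Q ((X - 1) * P) = TT (DD Q) P := by
  induction P using Polynomial.induction_on' with
  | add f g hf hg => rw [mul_add, TT_add, TT_add, hf, hg]
  | monomial k a =>
    have h1 : (X - 1 : Polynomial ℂ) * monomial k a
        = monomial (k+1) a + monomial k (-a) := by
      rw [sub_mul, one_mul, X_mul_monomial, monomial_neg, sub_eq_add_neg]
    rw [h1, TT_add, TT_monomial, TT_monomial, TT_monomial]
    unfold DD
    rw [eval_sub, eval_comp]
    push_cast
    simp only [eval_add, eval_X, eval_C]
    ring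

lemma TT_pow (t : ℕ) (Q P : Polynomial ℂ) :
    TT Q ((X - 1) ^ t * P) = TT (DD^[t] Q) P := by
  induction t generalizing Q P with
  | zero => simp
  | succ t ih =>
    have : (X - 1 : Polynomial ℂ) ^ (t+1) * P = (X - 1) ^ t * ((X - 1) * P) := by ring
    rw [this, ih, TT_step, ← Function.iterate_succ_apply' DD t Q]

lemma DD_zero : DD (0 : Polynomial ℂ) = 0 := by simp [DD]

lemma DD_degree_lt (Q : Polynomial ℂ) (h : Q ≠ 0) (h2 : Q.natDegree ≠ 0) :
    (DD Q).degree < Q.degree := by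
  have hXC : (X + C 1 : Polynomial ℂ).natDegree = 1 := natDegree_X_add_C 1
  have hlc : (Q.comp (X + C 1)).leadingCoeff = Q.leadingCoeff := by
    rw [leadingCoeff_comp (by rw [hXC]; norm_num),
      (monic_X_add_C (1 : ℂ)).leadingCoeff, one_pow, mul_one]
  have hne : Q.comp (X + C 1) ≠ 0 := by
    intro hh
    apply h
    rw [← leadingCoeff_eq_zero, ← hlc, hh, leadingCoeff_zero]
  have hdeg : (Q.comp (X + C 1)).degree = Q.degree := by
    rw [degree_eq_natDegree hne, degree_eq_natDegree h, natDegree_comp, hXC, mul_one]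
  unfold DD
  have := degree_sub_lt hdeg hne hlc
  rwa [hdeg] at this

lemma DD_iterate_zero : ∀ (m : ℕ) (Q : Polynomial ℂ), Q.natDegree ≤ m → DD^[m+1] Q = 0 := by
  intro m
  induction m with
  | zero =>
    intro Q h
    have hQ : Q = C (Q.coeff 0) := Polynomial.eq_C_of_natDegree_le_zero h
    rw [Function.iterate_one, hQ]
    simp [DD]
  | succ m ih =>
    intro Q h
    rw [Function.iterate_succ_apply]
    by_cases h0 : DD Q = 0
    · rw [h0]
      exact Function.iterate_fixed DD_zero (m+1)
    · apply ih
      by_cases hd : Q.natDegree = 0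
      · exfalso
        apply h0
        rw [Polynomial.eq_C_of_natDegree_le_zero hd.le]
        simp [DD]
      · have hQ : Q ≠ 0 := by
          intro hh; apply h0; rw [hh]; exact DD_zero
        have := natDegree_lt_natDegree h0 (DD_degree_lt Q hQ hd)
        omega

theorem stmt13 (p q : ℝ) (hp : 1 < p) (hq : 1 < q) (hpq : 1/p + 1/q = 1)
    (n : ℕ) (L : ℝ) (hL : 0 < L) (m : ℕ)
    (Q : Polynomial ℂ) (hQm : Q.natDegree ≤ m)
    (hQ : ‖Q.eval 0‖ >
      (1/L) * (∑ j ∈ Finset.Icc 1 n, ‖Q.eval (j : ℂ)‖ ^ q) ^ (1/q))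
    (P : Polynomial ℂ) (hP0 : P ≠ 0) (hPn : P.natDegree ≤ n)
    (hcoeff : ‖P.coeff 0‖ ≥
      L * (∑ j ∈ Finset.Icc 1 n, ‖P.coeff j‖ ^ p) ^ (1/p)) :
    ¬ ((X - 1) ^ (m + 1) ∣ P) := by
  rintro ⟨R, hR⟩
  -- The key vanishing identity
  have hT : TT Q P = 0 := by
    rw [hR, TT_pow, DD_iterate_zero m Q hQm]
    unfold TT
    simp [Polynomial.sum]
  -- Rewrite TT as a sum over range (n+1)
  have hsum : ∑ j ∈ Finset.range (n+1), P.coeff j * Q.eval (j : ℂ) = 0 := by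
    rw [← hT]
    unfold TT
    rw [Polynomial.sum_over_range' P (by intro i; ring) (n+1) (by omega)]
  have hins : Finset.range (n+1) = insert 0 (Finset.Icc 1 n) := by
    ext x; simp [Nat.lt_succ_iff]; omega
  have h0notin : (0 : ℕ) ∉ Finset.Icc 1 n := by simp
  rw [hins, Finset.sum_insert h0notin] at hsum
  have hkey : P.coeff 0 * Q.eval 0 = -∑ j ∈ Finset.Icc 1 n, P.coeff j * Q.eval (j : ℂ) := by
    push_cast at hsum
    linear_combination hsum
  -- Hölder
  set A := (∑ j ∈ Finset.Icc 1 n, ‖P.coeff j‖ ^ p) ^ (1/p) with hAdef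
  set B := (∑ j ∈ Finset.Icc 1 n, ‖Q.eval (j : ℂ)‖ ^ q) ^ (1/q) with hBdef
  have hSA : 0 ≤ ∑ j ∈ Finset.Icc 1 n, ‖P.coeff j‖ ^ p :=
    Finset.sum_nonneg fun j _ => Real.rpow_nonneg (norm_nonneg _) _
  have hA0 : 0 ≤ A := Real.rpow_nonneg hSA _
  have hB0 : 0 ≤ B := Real.rpow_nonneg
    (Finset.sum_nonneg fun j _ => Real.rpow_nonneg (norm_nonneg _) _) _
  have hholder : ‖P.coeff 0‖ * ‖Q.eval 0‖ ≤ A * B := by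
    have h1 : ‖P.coeff 0 * Q.eval 0‖
        ≤ ∑ j ∈ Finset.Icc 1 n, ‖P.coeff j‖ * ‖Q.eval (j : ℂ)‖ := by
      rw [hkey, norm_neg]
      refine le_trans (norm_sum_le _ _) ?_
      refine le_of_eq (Finset.sum_congr rfl fun j _ => ?_)
      exact norm_mul _ _
    have h2 : ∑ j ∈ Finset.Icc 1 n, ‖P.coeff j‖ * ‖Q.eval (j : ℂ)‖
        ≤ A * B := by
      have := Real.inner_le_Lp_mul_Lq (Finset.Icc 1 n)
        (fun j => ‖P.coeff j‖) (fun j => ‖Q.eval (j : ℂ)‖)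
        (Real.holderConjugate_iff.mpr ⟨hp, by simpa [one_div] using hpq⟩)
      rw [hAdef, hBdef]
      simpa [abs_norm, one_div] using this
    calc ‖P.coeff 0‖ * ‖Q.eval 0‖
        = ‖P.coeff 0 * Q.eval 0‖ := (norm_mul _ _).symm
      _ ≤ _ := h1
      _ ≤ A * B := h2
  have hBlt : B < L * ‖Q.eval 0‖ := by
    have h' : 1/L * B < ‖Q.eval 0‖ := hQ
    have h'' := mul_lt_mul_of_pos_left h' hL
    rw [show L * (1/L * B) = B by field_simp] at h''
    exact h''
  have hq0pos : 0 < ‖Q.eval 0‖ := by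
    nlinarith [hBlt, hB0, hL]
  by_cases hA : A = 0
  · -- all coefficients vanish, so P = 0
    have hS0 : ∑ j ∈ Finset.Icc 1 n, ‖P.coeff j‖ ^ p = 0 := by
      by_contra hS
      have hSpos : 0 < ∑ j ∈ Finset.Icc 1 n, ‖P.coeff j‖ ^ p :=
        lt_of_le_of_ne hSA (Ne.symm hS)
      have : (0:ℝ) < A := Real.rpow_pos_of_pos hSpos _
      linarith
    have hcj : ∀ j ∈ Finset.Icc 1 n, ‖P.coeff j‖ ^ p = 0 :=
      (Finset.sum_eq_zero_iff_of_nonneg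
        (fun j _ => Real.rpow_nonneg (norm_nonneg _) _)).mp hS0
    have hc0 : P.coeff 0 = 0 := by
      have hAB : A * B = 0 := by rw [hA, zero_mul]
      have h1 : ‖P.coeff 0‖ ≤ 0 := by
        nlinarith [hholder, hq0pos, hAB]
      have := norm_nonneg (P.coeff 0)
      have : ‖P.coeff 0‖ = 0 := le_antisymm h1 this
      exact norm_eq_zero.mp this
    apply hP0
    ext k
    rcases Nat.eq_zero_or_pos k with hk | hk
    · simpa [hk] using hc0
    · by_cases hkn : k ≤ n
      · have := hcj k (Finset.mem_Icc.mpr ⟨hk, hkn⟩)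
        have habs : ‖P.coeff k‖ = 0 := by
          by_contra hne
          have hpos : 0 < ‖P.coeff k‖ :=
            lt_of_le_of_ne (norm_nonneg _) (Ne.symm hne)
          have : (0:ℝ) < ‖P.coeff k‖ ^ p := Real.rpow_pos_of_pos hpos _
          linarith
        simpa using norm_eq_zero.mp habs
      · have hlt : P.natDegree < k := by omega
        simp [Polynomial.coeff_eq_zero_of_natDegree_lt hlt]
  · have hApos : 0 < A := lt_of_le_of_ne hA0 (Ne.symm hA)
    have h5 : A * B < A * (L * ‖Q.eval 0‖) :=
      mul_lt_mul_of_pos_left hBlt hApos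
    have h6 : (L * A) * ‖Q.eval 0‖
        ≤ ‖P.coeff 0‖ * ‖Q.eval 0‖ :=
      mul_le_mul_of_nonneg_right hcoeff hq0pos.le
    nlinarith [h5, h6, hholder]
end

section
/- For arbitrary real numbers A > 0 and M > 025 there exists a polynomial G with real coefficients such that F = G² has degree m < √π·√A·M^{1/4} + 2, F(0) = M, and 0 ≤ F(x) ≤ min{M, x^{−2}} for all x ∈ (0, A]. -/
open Polynomial


private lemma my_mul_cos_le_sin {u : ℝ} (h0 : 0 ≤ u) (h1 : u ≤ Real.pi / 2) :
    u * Real.cos u ≤ Real.sin u := by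
  rcases eq_or_lt_of_le h0 with h | h
  · simp [← h]
  rcases le_or_gt (Real.cos u) 0 with hc | hc
  · have hs : 0 ≤ Real.sin u :=
      Real.sin_nonneg_of_nonneg_of_le_pi h0 (by linarith [Real.pi_pos])
    nlinarith
  · have hu2 : u < Real.pi / 2 := by
      rcases eq_or_lt_of_le h1 with h2 | h2
      · exfalso; rw [h2] at hc; simp at hc
      · exact h2
    have ht := Real.lt_tan h hu2
    rw [Real.tan_eq_sin_div_cos] at ht
    have h3 : u * Real.cos u < (Real.sin u / Real.cos u) * Real.cos u := by nlinarith
    calc u * Real.cos u ≤ Real.sin u / Real.cos u * Real.cos u := h3.le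
      _ = Real.sin u := by field_simp

private lemma my_step2 {α θ : ℝ} (hα : 0 < α) (hθ1 : α ≤ θ) (hθ2 : θ ≤ Real.pi - α) :
    (θ - α) * Real.sin α ≤ Real.cos α - Real.cos θ := by
  have hu0 : 0 ≤ (θ - α) / 2 := by linarith
  have hu2 : (θ - α) / 2 ≤ Real.pi / 2 := by linarith
  have hv0 : 0 ≤ (θ + α) / 2 := by linarith
  have hv2 : (θ + α) / 2 ≤ Real.pi / 2 := by linarith
  have hcos : Real.cos α - Real.cos θ
      = 2 * Real.sin ((θ + α) / 2) * Real.sin ((θ - α) / 2) := by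
    rw [Real.cos_sub_cos]
    have h1 : (α - θ) / 2 = -((θ - α) / 2) := by ring
    have h2 : (α + θ) / 2 = (θ + α) / 2 := by ring
    rw [h1, h2, Real.sin_neg]
    ring
  have hsinα : Real.sin α = Real.sin ((θ + α) / 2) * Real.cos ((θ - α) / 2)
      - Real.cos ((θ + α) / 2) * Real.sin ((θ - α) / 2) := by
    have h1 : α = (θ + α) / 2 - (θ - α) / 2 := by ring
    nth_rewrite 1 [h1]
    rw [Real.sin_sub]
  have hsv : 0 ≤ Real.sin ((θ + α) / 2) :=
    Real.sin_nonneg_of_nonneg_of_le_pi hv0 (by linarith [Real.pi_pos])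
  have hcv : 0 ≤ Real.cos ((θ + α) / 2) :=
    Real.cos_nonneg_of_mem_Icc ⟨by linarith [Real.pi_pos], hv2⟩
  have hsu : 0 ≤ Real.sin ((θ - α) / 2) :=
    Real.sin_nonneg_of_nonneg_of_le_pi hu0 (by linarith [Real.pi_pos])
  have hkey := my_mul_cos_le_sin hu0 hu2
  nlinarith [mul_le_mul_of_nonneg_left hkey hsv,
    mul_nonneg (mul_nonneg hu0 hcv) hsu]

private lemma my_core (d : ℕ) (hd : 2 ≤ d) {θ : ℝ}
    (hθ1 : Real.pi / (2 * d) ≤ θ) (hθ2 : θ ≤ Real.pi) :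
    |Real.cos (d * θ)| * Real.sin (Real.pi / (2 * d))
      ≤ d * (Real.cos (Real.pi / (2 * d)) - Real.cos θ) := by
  have hπ := Real.pi_pos
  have hdR : (2 : ℝ) ≤ (d : ℝ) := by exact_mod_cast hd
  set α := Real.pi / (2 * d) with hα_def
  have hα0 : 0 < α := by positivity
  have hα4 : α ≤ Real.pi / 4 := by
    rw [hα_def, div_le_div_iff₀ (by positivity) (by norm_num)]
    nlinarith
  have hα1 : α ≤ 1 := by nlinarith [Real.pi_le_four]
  have hαπ : α < Real.pi := by
    rw [hα_def]
    apply div_lt_self hπ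
    nlinarith
  have hsinα : 0 < Real.sin α := Real.sin_pos_of_pos_of_lt_pi hα0 hαπ
  have hdα : (d : ℝ) * α = Real.pi / 2 := by
    rw [hα_def]
    field_simp
  have hca : (1:ℝ)/2 ≤ Real.cos α := by
    nlinarith [Real.one_sub_sq_div_two_le_cos (x := α)]
  rcases le_or_gt θ (Real.pi - α) with hcase | hcase
  · -- main region
    have hc0 : Real.cos ((d:ℝ) * α) = 0 := by rw [hdα, Real.cos_pi_div_two]
    have h1 : |Real.cos (d * θ)| ≤ d * (θ - α) := by
      have e1 : Real.cos ((d:ℝ) * θ) = Real.cos ((d:ℝ) * θ) - Real.cos ((d:ℝ) * α) := by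
        rw [hc0]; ring
      rw [e1, Real.cos_sub_cos]
      have hA1 : |Real.sin (((d:ℝ) * θ + (d:ℝ) * α) / 2)| ≤ 1 := Real.abs_sin_le_one _
      have h2' : (0:ℝ) ≤ ((d:ℝ) * θ - (d:ℝ) * α) / 2 := by nlinarith
      have hB1 : |Real.sin (((d:ℝ) * θ - (d:ℝ) * α) / 2)| ≤ ((d:ℝ) * θ - (d:ℝ) * α) / 2 :=
        calc |Real.sin (((d:ℝ) * θ - (d:ℝ) * α) / 2)| ≤ |((d:ℝ) * θ - (d:ℝ) * α) / 2| :=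
              Real.abs_sin_le_abs
          _ = ((d:ℝ) * θ - (d:ℝ) * α) / 2 := abs_of_nonneg h2'
      rw [abs_mul, abs_mul, abs_neg, abs_two]
      have h2 : (0:ℝ) ≤ ((d:ℝ) * θ - (d:ℝ) * α) / 2 := by nlinarith
      nlinarith [abs_nonneg (Real.sin (((d:ℝ) * θ + (d:ℝ) * α) / 2)),
        abs_nonneg (Real.sin (((d:ℝ) * θ - (d:ℝ) * α) / 2))]
    have h2 := my_step2 hα0 hθ1 hcase
    nlinarith [mul_le_mul_of_nonneg_right h1 hsinα.le]
  · -- tail region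
    have hct : Real.cos θ ≤ -Real.cos α := by
      have := Real.cos_le_cos_of_nonneg_of_le_pi (by linarith : (0:ℝ) ≤ Real.pi - α) hθ2 hcase.le
      rwa [Real.cos_pi_sub] at this
    have h1 : |Real.cos ((d:ℝ) * θ)| * Real.sin α ≤ 1 := by
      have := Real.abs_cos_le_one ((d:ℝ) * θ)
      nlinarith [Real.sin_le_one α, abs_nonneg (Real.cos ((d:ℝ) * θ))]
    nlinarith


private lemma my_natDegree_T_le (n : ℕ) : (Chebyshev.T ℝ (n : ℤ)).natDegree ≤ n := by
  induction n using Nat.strong_induction_on with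
  | _ n ih =>
    match n, ih with
    | 0, _ => simp [Chebyshev.T_zero]
    | 1, _ => simp [Chebyshev.T_one]
    | (k+2), ih =>
      have h := Chebyshev.T_add_two ℝ (k : ℤ)
      have e2 : ((k : ℤ) + 2) = ((k + 2 : ℕ) : ℤ) := by push_cast; ring
      have e1 : ((k : ℤ) + 1) = ((k + 1 : ℕ) : ℤ) := by push_cast; ring
      rw [e2, e1] at h
      rw [h]
      have h1 := ih (k+1) (by omega)
      have h0 := ih k (by omega)
      apply le_trans (natDegree_sub_le _ _)
      have h2 : (2 * X * Chebyshev.T ℝ ((k+1 : ℕ) : ℤ)).natDegree ≤ k + 2 := by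
        apply le_trans natDegree_mul_le
        have h3 : (2 * X : ℝ[X]).natDegree ≤ 1 :=
          le_trans natDegree_mul_le (by simp)
        omega
      omega

set_option maxHeartbeats 2000000 in
theorem stmt14 (A M : ℝ) (hA : 0 < A) (hM : 0 < M) :
    ∃ G : Polynomial ℝ,
      ((G ^ 2).natDegree : ℝ) < Real.sqrt Real.pi * Real.sqrt A * M ^ ((1:ℝ)/4) + 2 ∧
      (G ^ 2).eval 0 = M ∧
      ∀ x ∈ Set.Ioc (0 : ℝ) A, 0 ≤ (G ^ 2).eval x ∧ (G ^ 2).eval x ≤ min M (1 / x ^ 2) := by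
  have hπ := Real.pi_pos
  have hsM : 0 < Real.sqrt M := Real.sqrt_pos.mpr hM
  have hsqM : Real.sqrt M ^ 2 = M := Real.sq_sqrt hM.le
  set s := A * Real.sqrt M with hs_def
  have hs0 : 0 < s := by positivity
  have hM4 : M ^ ((1:ℝ)/4) = Real.sqrt (Real.sqrt M) := by
    rw [show ((1:ℝ)/4) = (1/2 : ℝ) * (1/2 : ℝ) by norm_num, Real.rpow_mul hM.le,
      ← Real.sqrt_eq_rpow, ← Real.sqrt_eq_rpow]
  have hRHS : Real.sqrt A * M ^ ((1:ℝ)/4) = Real.sqrt s := by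
    rw [hM4, hs_def, ← Real.sqrt_mul hA.le]
  rcases le_or_gt s 1 with hsmall | hbig
  · -- constant polynomial case
    refine ⟨C (Real.sqrt M), ?_, ?_, ?_⟩
    · have h0 : ((C (Real.sqrt M) : ℝ[X]) ^ 2).natDegree = 0 := by
        rw [← C_pow, natDegree_C]
      rw [h0]
      have : (0:ℝ) ≤ Real.sqrt Real.pi * Real.sqrt A * M ^ ((1:ℝ)/4) := by positivity
      push_cast
      linarith
    · rw [eval_pow, eval_C, hsqM]
    · intro x hx
      obtain ⟨hx0, hxA⟩ := hx
      have he : ((C (Real.sqrt M) : ℝ[X]) ^ 2).eval x = M := by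
        rw [eval_pow, eval_C, hsqM]
      rw [he]
      refine ⟨hM.le, le_min le_rfl ?_⟩
      rw [le_div_iff₀ (by positivity)]
      have h1 : x^2 ≤ A^2 := by nlinarith only [hx0, hxA]
      have h3 : s^2 = A^2 * M := by rw [hs_def, mul_pow, hsqM]
      nlinarith only [mul_le_mul_of_nonneg_left h1 hM.le, h3, hsmall, hs0]
  · -- main case
    set z := Real.sqrt (Real.pi * s / 4 + Real.pi ^ 2 / 16) with hz_def
    have hz0 : 0 ≤ z := Real.sqrt_nonneg _
    have hz2 : z ^ 2 = Real.pi * s / 4 + Real.pi ^ 2 / 16 :=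
      Real.sq_sqrt (by positivity)
    have hz1 : 1 < z := by nlinarith only [Real.pi_gt_three, hz2, hz0, hbig, hs0]
    set d : ℕ := ⌈z⌉₊ with hd_def
    have hzd : z ≤ (d : ℝ) := Nat.le_ceil z
    have hdlt : (d : ℝ) < z + 1 := Nat.ceil_lt_add_one hz0
    have hd2 : 2 ≤ d := by
      have h1 : (1:ℝ) < (d:ℝ) := lt_of_lt_of_le hz1 hzd
      have h2 : 1 < d := by exact_mod_cast h1
      omega
    have hdR : (2:ℝ) ≤ (d:ℝ) := by exact_mod_cast hd2
    have hd0R : (0:ℝ) < (d:ℝ) := by linarith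
    set α := Real.pi / (2 * (d:ℝ)) with hα_def
    have hα0 : 0 < α := by positivity
    have hαπ : α < Real.pi := by
      rw [hα_def]; apply div_lt_self hπ; linarith only [hdR]
    have hsinα : 0 < Real.sin α := Real.sin_pos_of_pos_of_lt_pi hα0 hαπ
    have hsinα1 : Real.sin α ≤ α :=
      calc Real.sin α ≤ |Real.sin α| := le_abs_self _
        _ ≤ |α| := Real.abs_sin_le_abs
        _ = α := abs_of_nonneg hα0.le
    have hdα : (d:ℝ) * α = Real.pi / 2 := by
      rw [hα_def]; field_simp
    have hα1 : α ≤ 1 := by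
      rw [hα_def, div_le_one (by positivity)]
      nlinarith only [Real.pi_le_four, hdR]
    set t₀ := Real.cos α with ht_def
    have hαsq : α^2 ≤ 1 := by nlinarith only [hα0, hα1]
    have hca : (1:ℝ)/2 ≤ t₀ := by
      have h := Real.one_sub_sq_div_two_le_cos (x := α)
      rw [← ht_def] at h
      linarith only [h, hαsq]
    have ht1 : t₀ ≤ 1 := Real.cos_le_one α
    have h1t : 0 < 1 + t₀ := by linarith
    set b := (1 + t₀) / A with hb_def
    have hb0 : 0 < b := by positivity
    set K := (d:ℝ) * (1 + t₀) / (A * Real.sin α) with hK_def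
    have hK0 : 0 < K := by positivity
    -- key inequality : s * sin α ≤ d * (1 + t₀)
    have hα2 : α ^ 2 * (4 * (d:ℝ)^2) = Real.pi ^ 2 := by
      have h : ((d:ℝ) * α) ^ 2 = (Real.pi / 2) ^ 2 := by rw [hdα]
      linear_combination 4 * h
    have hd2sq : Real.pi * s / 4 + Real.pi^2/16 ≤ (d:ℝ)^2 := by nlinarith only [hzd, hz2, hz0]
    have hα3 : α * (2 * (d:ℝ)) = Real.pi := by
      rw [hα_def]; field_simp
    have hkey : s * Real.sin α ≤ (d:ℝ) * (1 + t₀) := by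
      have h1 : s * Real.sin α ≤ s * α := by nlinarith only [hs0, hsinα1]
      have h2 : 1 - α^2/2 ≤ t₀ := Real.one_sub_sq_div_two_le_cos
      have h3 : 2*(d:ℝ)^2*(2 - α^2/2) ≤ 2*(d:ℝ)^2*(1+t₀) := by nlinarith only [h2, sq_nonneg (d:ℝ)]
      have h4 : 2*(d:ℝ)^2*(2 - α^2/2) = 4*(d:ℝ)^2 - Real.pi^2/4 := by
        linear_combination (-(1:ℝ)/4) * hα2
      have h5 : Real.pi * s ≤ 4*(d:ℝ)^2 - Real.pi^2/4 := by linarith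
      have h6 : s * α * (2*(d:ℝ)) ≤ ((d:ℝ)*(1+t₀)) * (2*(d:ℝ)) := by
        calc s*α*(2*(d:ℝ)) = Real.pi * s := by linear_combination s * hα3
          _ ≤ 4*(d:ℝ)^2 - Real.pi^2/4 := h5
          _ = 2*(d:ℝ)^2*(2-α^2/2) := h4.symm
          _ ≤ 2*(d:ℝ)^2*(1+t₀) := h3
          _ = ((d:ℝ)*(1+t₀))*(2*(d:ℝ)) := by ring
      have h7 : s*α ≤ (d:ℝ)*(1+t₀) := le_of_mul_le_mul_right h6 (by positivity)
      linarith
    have hKM : Real.sqrt M ≤ K := by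
      rw [hK_def, le_div_iff₀ (by positivity)]
      calc Real.sqrt M * (A * Real.sin α) = s * Real.sin α := by rw [hs_def]; ring
        _ ≤ _ := hkey
    -- the polynomials
    set lp : ℝ[X] := C t₀ - C b * X with hl_def
    set q : ℝ[X] := -((Chebyshev.T ℝ (d:ℤ)).comp lp) with hq_def
    have hqeval : ∀ x : ℝ, q.eval x = -(Chebyshev.T ℝ (d:ℤ)).eval (t₀ - b * x) := by
      intro x; rw [hq_def]; simp [hl_def, eval_comp]
    have hTθ : ∀ θ : ℝ, (Chebyshev.T ℝ (d:ℤ)).eval (Real.cos θ) = Real.cos ((d:ℝ) * θ) := by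
      intro θ
      have h := Polynomial.Chebyshev.T_real_cos θ (d:ℤ)
      rwa [show (((d:ℤ)):ℝ) = (d:ℝ) by push_cast; ring] at h
    have hq0 : q.eval 0 = 0 := by
      rw [hqeval, mul_zero, sub_zero, ht_def, hTθ, hdα, Real.cos_pi_div_two, neg_zero]
    set r : ℝ[X] := q /ₘ X with hr_def
    have hXr : X * r = q := by
      have h := modByMonic_add_div q (X : ℝ[X])
      rwa [modByMonic_X, hq0, map_zero, zero_add] at h
    have hreval : ∀ x : ℝ, q.eval x = x * r.eval x := by
      intro x; rw [← hXr]; simp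
    -- the linear coefficient of q equals K (times x-divided)
    have hU : (Chebyshev.U ℝ ((d:ℤ) - 1)).eval t₀ * Real.sin α = 1 := by
      have h := Polynomial.Chebyshev.U_real_cos α ((d:ℤ) - 1)
      rw [ht_def]
      rw [h]
      push_cast
      rw [show ((d:ℝ) - 1 + 1) * α = (d:ℝ) * α by ring, hdα, Real.sin_pi_div_two]
    have hTd : (derivative (Chebyshev.T ℝ (d:ℤ))).eval t₀ * Real.sin α = (d:ℝ) := by
      rw [Polynomial.Chebyshev.T_derivative_eq_U, eval_mul, eval_intCast]
      push_cast
      rw [mul_assoc, hU, mul_one]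
    have hTd' : (derivative (Chebyshev.T ℝ (d:ℤ))).eval t₀ = (d:ℝ) / Real.sin α := by
      rw [eq_div_iff hsinα.ne']; exact hTd
    have hq1coeff : q.coeff 1 = (d:ℝ) * b / Real.sin α := by
      have hder : derivative q
          = -(derivative lp * (derivative (Chebyshev.T ℝ (d:ℤ))).comp lp) := by
        rw [hq_def, derivative_neg, derivative_comp]
      have hderl : derivative lp = -(C b) := by
        rw [hl_def]; simp
      have hc : q.coeff 1 = (derivative q).eval 0 := by
        rw [← coeff_zero_eq_eval_zero, coeff_derivative]
        push_cast
        ring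
      have hl0 : lp.eval 0 = t₀ := by simp [hl_def]
      rw [hc, hder, eval_neg, eval_mul, hderl, eval_neg, eval_C, eval_comp, hl0, hTd']
      ring
    have hrcoeff : r.eval 0 = K := by
      rw [← coeff_zero_eq_eval_zero]
      have h : q.coeff 1 = r.coeff 0 := by rw [← hXr, coeff_X_mul]
      rw [← h, hq1coeff, hK_def, hb_def]
      field_simp
    set G : ℝ[X] := C (Real.sqrt M / K) * r with hG_def
    refine ⟨G, ?_, ?_, ?_⟩
    · -- degree bound
      have hqdeg : q.natDegree ≤ d := by
        rw [hq_def, natDegree_neg]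
        have h1 : (Chebyshev.T ℝ (d:ℤ)).natDegree ≤ d := my_natDegree_T_le d
        have h2 : lp.natDegree ≤ 1 := by
          rw [hl_def]
          apply le_trans (natDegree_sub_le _ _)
          apply max_le
          · simp
          · exact le_trans (natDegree_C_mul_le _ _) natDegree_X_le
        calc ((Chebyshev.T ℝ (d:ℤ)).comp lp).natDegree
            ≤ (Chebyshev.T ℝ (d:ℤ)).natDegree * lp.natDegree := natDegree_comp_le
          _ ≤ d * 1 := Nat.mul_le_mul h1 h2
          _ = d := mul_one d
      have hrdeg : r.natDegree ≤ d - 1 := by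
        rw [hr_def, natDegree_divByMonic q monic_X, natDegree_X]
        omega
      have hGdeg : (G^2).natDegree ≤ 2 * (d-1) := by
        apply le_trans natDegree_pow_le
        have h := natDegree_C_mul_le (Real.sqrt M / K) r
        rw [hG_def]
        omega
      have hcast : ((G^2).natDegree : ℝ) ≤ 2*((d:ℝ) - 1) := by
        have h2 : ((2*(d-1) : ℕ) : ℝ) = 2*((d:ℝ)-1) := by
          push_cast [Nat.cast_sub (by omega : 1 ≤ d)]
          ring
        calc ((G^2).natDegree : ℝ) ≤ ((2*(d-1):ℕ):ℝ) := by exact_mod_cast hGdeg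
          _ = _ := h2
      rw [mul_assoc, hRHS]
      set w := Real.sqrt (Real.pi * s) with hw_def
      have hw0 : 0 ≤ w := Real.sqrt_nonneg _
      have hw2 : w^2 = Real.pi * s := Real.sq_sqrt (by positivity)
      have hzw : z ≤ w/2 + Real.pi/4 := by
        have h1 : z^2 ≤ (w/2 + Real.pi/4)^2 := by nlinarith only [hz2, hw2, hw0, hπ]
        calc z = Real.sqrt (z^2) := (Real.sqrt_sq hz0).symm
          _ ≤ Real.sqrt ((w/2+Real.pi/4)^2) := Real.sqrt_le_sqrt h1
          _ = w/2 + Real.pi/4 := Real.sqrt_sq (by positivity)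
      have hwsplit : w = Real.sqrt Real.pi * Real.sqrt s := by
        rw [hw_def, Real.sqrt_mul hπ.le]
      have hπ4 := Real.pi_le_four
      calc ((G^2).natDegree : ℝ) ≤ 2*((d:ℝ)-1) := hcast
        _ < 2*z := by linarith
        _ ≤ w + Real.pi/2 := by linarith
        _ ≤ Real.sqrt Real.pi * Real.sqrt s + 2 := by rw [hwsplit]; linarith
    · -- value at 0
      rw [eval_pow, hG_def, eval_mul, eval_C, hrcoeff, div_mul_cancel₀ _ hK0.ne']
      exact hsqM
    · -- bounds on (0, A]
      intro x hx
      obtain ⟨hx0, hxA⟩ := hx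
      have hbA : b * A = 1 + t₀ := by rw [hb_def]; field_simp
      have hy1 : -1 ≤ t₀ - b * x := by
        have h : b * x ≤ 1 + t₀ := by nlinarith only [hbA, hb0, hxA]
        linarith
      have hbx0 : 0 < b * x := mul_pos hb0 hx0
      have hy2 : t₀ - b * x ≤ 1 := by linarith
      set θ := Real.arccos (t₀ - b * x) with hθ_def
      have hθcos : Real.cos θ = t₀ - b * x := Real.cos_arccos hy1 hy2
      have hθ0 : 0 ≤ θ := Real.arccos_nonneg _
      have hθπ : θ ≤ Real.pi := Real.arccos_le_pi _
      have hθα : α ≤ θ := by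
        by_contra h
        push_neg at h
        have h2 := Real.strictAntiOn_cos ⟨hθ0, hθπ⟩ ⟨hα0.le, hαπ.le⟩ h
        rw [hθcos, ← ht_def] at h2
        linarith
      have hθα' : Real.pi / (2*(d:ℝ)) ≤ θ := by rw [← hα_def]; exact hθα
      have hcore : |Real.cos ((d:ℝ) * θ)| * Real.sin α ≤ (d:ℝ) * (t₀ - Real.cos θ) := by
        have h := my_core d hd2 hθα' hθπ
        rw [← hα_def, ← ht_def] at h
        exact h
      have hqx : q.eval x = -Real.cos ((d:ℝ) * θ) := by
        rw [hqeval, ← hθcos, hTθ]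
      have habs1 : |q.eval x| ≤ 1 := by
        rw [hqx, abs_neg]; exact Real.abs_cos_le_one _
      have habs2 : |q.eval x| ≤ K * x := by
        have h1 : |q.eval x| * Real.sin α ≤ (d:ℝ) * (t₀ - Real.cos θ) := by
          rw [hqx, abs_neg]; exact hcore
        rw [hθcos] at h1
        have h2 : (d:ℝ) * (t₀ - (t₀ - b*x)) = K * x * Real.sin α := by
          rw [hK_def, hb_def]; field_simp; ring
        rw [h2] at h1
        exact le_of_mul_le_mul_right h1 hsinα
      have hGx : (G^2).eval x = (Real.sqrt M / K)^2 * (q.eval x)^2 / x^2 := by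
        rw [eval_pow, hG_def, eval_mul, eval_C, mul_pow]
        have h : (r.eval x)^2 = (q.eval x)^2 / x^2 := by
          rw [hreval x, mul_pow]
          field_simp
        rw [h]
        ring
      refine ⟨?_, le_min ?_ ?_⟩
      · rw [eval_pow]; exact sq_nonneg _
      · rw [hGx]
        have he2 : (q.eval x)^2 ≤ (K*x)^2 := by
          have h := pow_le_pow_left₀ (abs_nonneg (q.eval x)) habs2 2
          rwa [sq_abs] at h
        have hMK : (Real.sqrt M / K)^2 = M / K^2 := by rw [div_pow, hsqM]
        rw [hMK]
        calc M / K^2 * (q.eval x)^2 / x^2 ≤ M / K^2 * (K*x)^2 / x^2 := by gcongr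
          _ = M := by
            have h1 : M / K^2 * (K*x)^2 / x^2 = M * (K^2/K^2) * (x^2/x^2) := by ring
            rw [h1, div_self (pow_ne_zero 2 hK0.ne'), div_self (pow_ne_zero 2 hx0.ne'),
              mul_one, mul_one]
      · rw [hGx]
        have he1 : (q.eval x)^2 ≤ 1 := by
          have h := pow_le_pow_left₀ (abs_nonneg (q.eval x)) habs1 2
          rwa [sq_abs, one_pow] at h
        have hMK1 : (Real.sqrt M / K)^2 ≤ 1 := by
          rw [div_pow, hsqM]
          rw [div_le_one (by positivity)]
          nlinarith only [hKM, hsM, hsqM]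
        calc (Real.sqrt M / K)^2 * (q.eval x)^2 / x^2 ≤ 1 * 1 / x^2 := by gcongr
          _ = 1 / x^2 := by ring
end

section
/- Let q ∈ [1,∞). For every n ∈ ℕ and every real K with 0 < K < 2 there exists a polynomial F with real coefficients of degree m ≤ √n·(40K)^{q/2} + 2 such that |F(0)| > K·(Σ_{j=1}^n |F(j)|^q)^{1/q}. -/
open Polynomial Real

lemma T_eval_cosh (d : ℕ) (t : ℝ) :
    (Chebyshev.T ℝ (d : ℤ)).eval (Real.cosh t) = Real.cosh (d * t) := by
  induction d using Nat.twoStepInduction with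
  | zero => simp [Chebyshev.T_zero]
  | one => simp [Chebyshev.T_one]
  | more d ih ih1 =>
    have h2 : ((d : ℤ) + 2) = ((d + 2 : ℕ) : ℤ) := by push_cast; ring
    rw [← h2, Chebyshev.T_add_two]
    have : ((d:ℤ) + 1) = ((d + 1 : ℕ) : ℤ) := by push_cast; ring
    simp only [eval_sub, eval_mul, eval_ofNat, eval_X, this, ih, ih1]
    push_cast
    have := Real.cosh_add ((d + 1) * t) t
    have h3 : ((d:ℝ) + 2) * t = ((d:ℝ)+1) * t + t := by ring
    have h4 : (d:ℝ) * t = ((d:ℝ)+1) * t - t := by ring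
    rw [h3, Real.cosh_add, h4, Real.cosh_sub]
    ring

lemma abs_T_eval_le_one (d : ℕ) {x : ℝ} (h1 : -1 ≤ x) (h2 : x ≤ 1) :
    |(Chebyshev.T ℝ (d : ℤ)).eval x| ≤ 1 := by
  obtain ⟨θ, -, hθ⟩ := Real.surjOn_cos ⟨h1, h2⟩
  rw [← hθ, Chebyshev.T_real_cos]
  exact abs_cos_le_one _

lemma cosh_log_aux {y : ℝ} (hy : 1 ≤ y) :
    Real.cosh (Real.log (y + Real.sqrt (y ^ 2 - 1))) = y := by
  set s := Real.sqrt (y ^ 2 - 1) with hs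
  have hs0 : 0 ≤ s := Real.sqrt_nonneg _
  have hssq : s ^ 2 = y ^ 2 - 1 := Real.sq_sqrt (by nlinarith)
  have hg : 0 < y + s := by linarith
  rw [Real.cosh_eq, Real.exp_log hg, Real.exp_neg, Real.exp_log hg]
  have hinv : (y + s)⁻¹ = y - s := inv_eq_of_mul_eq_one_right (by nlinarith)
  rw [hinv]; ring

lemma one_le_g {y : ℝ} (hy : 1 ≤ y) : 1 ≤ y + Real.sqrt (y ^ 2 - 1) := by
  have := Real.sqrt_nonneg (y ^ 2 - 1); linarith

lemma T_eval_one_le (d : ℕ) {y : ℝ} (hy : 1 ≤ y) :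
    1 ≤ (Chebyshev.T ℝ (d : ℤ)).eval y := by
  calc (1:ℝ) ≤ Real.cosh (d * Real.log (y + Real.sqrt (y ^ 2 - 1))) := Real.one_le_cosh _
  _ = _ := by rw [← cosh_log_aux hy, T_eval_cosh, cosh_log_aux hy]

lemma T_eval_mono (d : ℕ) {u v : ℝ} (hu : 1 ≤ u) (huv : u ≤ v) :
    (Chebyshev.T ℝ (d : ℤ)).eval u ≤ (Chebyshev.T ℝ (d : ℤ)).eval v := by
  have hv : 1 ≤ v := le_trans hu huv
  have h1 : (Chebyshev.T ℝ (d : ℤ)).eval u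
      = Real.cosh (d * Real.log (u + Real.sqrt (u ^ 2 - 1))) := by
    conv_lhs => rw [← cosh_log_aux hu]
    rw [T_eval_cosh]
  have h2 : (Chebyshev.T ℝ (d : ℤ)).eval v
      = Real.cosh (d * Real.log (v + Real.sqrt (v ^ 2 - 1))) := by
    conv_lhs => rw [← cosh_log_aux hv]
    rw [T_eval_cosh]
  rw [h1, h2]
  rw [Real.cosh_le_cosh]
  have hgu : (1:ℝ) ≤ u + Real.sqrt (u ^ 2 - 1) := one_le_g hu
  have hgv : (1:ℝ) ≤ v + Real.sqrt (v ^ 2 - 1) := one_le_g hv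
  have hmono : u + Real.sqrt (u ^ 2 - 1) ≤ v + Real.sqrt (v ^ 2 - 1) := by
    have : Real.sqrt (u ^ 2 - 1) ≤ Real.sqrt (v ^ 2 - 1) :=
      Real.sqrt_le_sqrt (by nlinarith)
    linarith
  have hlu : 0 ≤ Real.log (u + Real.sqrt (u ^ 2 - 1)) := Real.log_nonneg hgu
  have hlv : 0 ≤ Real.log (v + Real.sqrt (v ^ 2 - 1)) := Real.log_nonneg hgv
  rw [abs_of_nonneg (by positivity), abs_of_nonneg (by positivity)]
  exact mul_le_mul_of_nonneg_left (Real.log_le_log (by linarith) hmono) (by positivity)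

lemma T_eval_growth (d : ℕ) {y : ℝ} (hy : 1 ≤ y) :
    (1 + Real.sqrt (y ^ 2 - 1)) ^ d ≤ 2 * (Chebyshev.T ℝ (d : ℤ)).eval y := by
  have h1 : (Chebyshev.T ℝ (d : ℤ)).eval y
      = Real.cosh (d * Real.log (y + Real.sqrt (y ^ 2 - 1))) := by
    conv_lhs => rw [← cosh_log_aux hy]
    rw [T_eval_cosh]
  rw [h1, Real.cosh_eq]
  have hg : (1:ℝ) ≤ y + Real.sqrt (y ^ 2 - 1) := one_le_g hy
  have h2 : Real.exp ((d:ℝ) * Real.log (y + Real.sqrt (y ^ 2 - 1)))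
      = (y + Real.sqrt (y ^ 2 - 1)) ^ d := by
    rw [Real.exp_nat_mul, Real.exp_log (by linarith)]
  have h3 : (1 + Real.sqrt (y ^ 2 - 1)) ^ d ≤ (y + Real.sqrt (y ^ 2 - 1)) ^ d := by
    apply pow_le_pow_left₀ (by positivity) (by linarith)
  have h4 : (0:ℝ) < Real.exp (-((d:ℝ) * Real.log (y + Real.sqrt (y ^ 2 - 1)))) :=
    Real.exp_pos _
  have := Real.exp_pos ((d:ℝ) * Real.log (y + Real.sqrt (y ^ 2 - 1)))
  calc (1 + Real.sqrt (y ^ 2 - 1)) ^ d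
      ≤ Real.exp ((d:ℝ) * Real.log (y + Real.sqrt (y ^ 2 - 1))) := by rw [h2]; exact h3
  _ ≤ 2 * ((Real.exp ((d:ℝ) * Real.log (y + Real.sqrt (y ^ 2 - 1))) + Real.exp (-((d:ℝ) * Real.log (y + Real.sqrt (y ^ 2 - 1))))) / 2) := by
      linarith

lemma natDegree_T_le (d : ℕ) : (Chebyshev.T ℝ (d : ℤ)).natDegree ≤ d := by
  induction d using Nat.twoStepInduction with
  | zero => simp [Chebyshev.T_zero]
  | one => simp [Chebyshev.T_one]
  | more d ih ih1 =>
    have h2 : ((d : ℤ) + 2) = ((d + 2 : ℕ) : ℤ) := by push_cast; ring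
    rw [← h2, Chebyshev.T_add_two]
    apply le_trans (natDegree_sub_le _ _)
    have h1 : ((d:ℤ) + 1) = ((d + 1 : ℕ) : ℤ) := by push_cast; ring
    rw [h1]
    have hm : (2 * X * Chebyshev.T ℝ ((d+1 : ℕ) : ℤ)).natDegree ≤ d + 2 := by
      apply le_trans (natDegree_mul_le)
      have : (2 * X : ℝ[X]).natDegree ≤ 1 := by
        apply le_trans (natDegree_mul_le)
        simp
      omega
    have : (Chebyshev.T ℝ (d : ℤ)).natDegree ≤ d + 2 := le_trans ih (by omega)
    omega

lemma bump (a N : ℝ) (ha : 0 < a) (haN : a < N) (d : ℕ) :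
    ∃ H : ℝ[X], H.natDegree ≤ d ∧ H.eval 0 = 1 ∧
      (∀ x : ℝ, 0 ≤ x → x ≤ N → |H.eval x| ≤ 1) ∧
      (∀ x : ℝ, a ≤ x → x ≤ N → |H.eval x| ≤ 2 / (1 + 2 * Real.sqrt (a / N)) ^ d) := by
  have hNa : 0 < N - a := by linarith
  have hN : 0 < N := by linarith
  set z : ℝ := (N + a) / (N - a) with hz
  set w : ℝ := 2 / (N - a) with hw
  have hz1 : 1 < z := by
    rw [hz, lt_div_iff₀ hNa]; linarith
  set Tv : ℝ := (Chebyshev.T ℝ (d : ℤ)).eval z with hTv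
  have hTv1 : 1 ≤ Tv := T_eval_one_le d hz1.le
  have hTvpos : 0 < Tv := by linarith
  set H : ℝ[X] := C Tv⁻¹ * ((Chebyshev.T ℝ (d : ℤ)).comp (C z - C w * X)) with hH
  have hevalH : ∀ x : ℝ, H.eval x = Tv⁻¹ * (Chebyshev.T ℝ (d : ℤ)).eval (z - w * x) := by
    intro x; simp [hH, eval_comp]
  refine ⟨H, ?_, ?_, ?_, ?_⟩
  · rw [hH]
    apply le_trans (natDegree_mul_le)
    have h1 : ((Chebyshev.T ℝ (d : ℤ)).comp (C z - C w * X)).natDegree ≤ d * 1 := by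
      apply le_trans (natDegree_comp_le)
      have : (C z - C w * X).natDegree ≤ 1 := by
        apply le_trans (natDegree_sub_le _ _)
        simp [natDegree_C_mul_le]
        exact le_trans (natDegree_mul_le) (by simp)
      exact Nat.mul_le_mul (natDegree_T_le d) this
    simp at h1 ⊢
    omega
  · rw [hevalH]
    simp only [mul_zero, sub_zero, ← hTv]
    exact inv_mul_cancel₀ hTvpos.ne'
  · intro x hx0 hxN
    rw [hevalH]
    rcases le_or_gt x a with hxa | hxa
    · -- x ∈ [0, a] : argument in [1, z]
      have harg1 : 1 ≤ z - w * x := by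
        have : w * x ≤ w * a := by
          apply mul_le_mul_of_nonneg_left hxa (by positivity)
        have hza : z - w * a = 1 := by
          rw [hz, hw]; field_simp; ring
        linarith
      have hargz : z - w * x ≤ z := by
        have : 0 ≤ w * x := by positivity
        linarith
      have h1 : (Chebyshev.T ℝ (d : ℤ)).eval (z - w * x) ≤ Tv :=
        T_eval_mono d harg1 hargz
      have h2 : 1 ≤ (Chebyshev.T ℝ (d : ℤ)).eval (z - w * x) := T_eval_one_le d harg1
      rw [abs_of_nonneg (by positivity)]
      rw [← inv_mul_cancel₀ hTvpos.ne']
      apply mul_le_mul_of_nonneg_left h1 (by positivity)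
    · -- x ∈ (a, N] : argument in [-1, 1]
      have harg1 : -1 ≤ z - w * x := by
        have hzn : z - w * N = -1 := by rw [hz, hw]; field_simp; ring
        have : w * x ≤ w * N := mul_le_mul_of_nonneg_left hxN (by positivity)
        linarith
      have harg2 : z - w * x ≤ 1 := by
        have hza : z - w * a = 1 := by rw [hz, hw]; field_simp; ring
        have : w * a ≤ w * x := mul_le_mul_of_nonneg_left hxa.le (by positivity)
        linarith
      have h1 : |(Chebyshev.T ℝ (d : ℤ)).eval (z - w * x)| ≤ 1 :=
        abs_T_eval_le_one d harg1 harg2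
      rw [abs_mul, abs_of_nonneg (by positivity : (0:ℝ) ≤ Tv⁻¹)]
      calc Tv⁻¹ * |(Chebyshev.T ℝ (d : ℤ)).eval (z - w * x)| ≤ Tv⁻¹ * 1 :=
            mul_le_mul_of_nonneg_left h1 (by positivity)
      _ ≤ 1 := by rw [mul_one]; exact inv_le_one_of_one_le₀ hTv1
  · intro x hxa hxN
    rw [hevalH]
    have harg1 : -1 ≤ z - w * x := by
      have hzn : z - w * N = -1 := by rw [hz, hw]; field_simp; ring
      have : w * x ≤ w * N := mul_le_mul_of_nonneg_left hxN (by positivity)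
      linarith
    have harg2 : z - w * x ≤ 1 := by
      have hza : z - w * a = 1 := by rw [hz, hw]; field_simp; ring
      have : w * a ≤ w * x := mul_le_mul_of_nonneg_left hxa (by positivity)
      linarith
    have h1 : |(Chebyshev.T ℝ (d : ℤ)).eval (z - w * x)| ≤ 1 :=
      abs_T_eval_le_one d harg1 harg2
    have hgrow : (1 + 2 * Real.sqrt (a / N)) ^ d ≤ 2 * Tv := by
      have hsq : 2 * Real.sqrt (a / N) ≤ Real.sqrt (z ^ 2 - 1) := by
        have hz2 : z ^ 2 - 1 = 4 * (a * N) / (N - a) ^ 2 := by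
          rw [hz]; field_simp; ring
        rw [hz2]
        have h4 : 4 * (a * N) / (N - a) ^ 2 = (2 * Real.sqrt (a * N) / (N - a)) ^ 2 := by
          rw [div_pow, mul_pow, Real.sq_sqrt (by positivity : (0:ℝ) ≤ a * N)]
          ring
        rw [h4, Real.sqrt_sq (by positivity)]
        have hs : Real.sqrt (a / N) = Real.sqrt (a * N) / N := by
          rw [show a / N = a * N / N ^ 2 by field_simp, Real.sqrt_div (by positivity),
            Real.sqrt_sq hN.le]
        rw [hs, mul_div_assoc' 2 _ N, div_le_div_iff₀ hN hNa]
        have : 0 ≤ Real.sqrt (a * N) := Real.sqrt_nonneg _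
        nlinarith
      have := T_eval_growth d hz1.le
      have hmono : (1 + 2 * Real.sqrt (a / N)) ^ d ≤ (1 + Real.sqrt (z ^ 2 - 1)) ^ d := by
        apply pow_le_pow_left₀ (by positivity) (by linarith)
      rw [← hTv] at this
      linarith
    have h2Tv : 0 < (1 + 2 * Real.sqrt (a / N)) ^ d := by positivity
    rw [abs_mul, abs_of_nonneg (by positivity : (0:ℝ) ≤ Tv⁻¹)]
    calc Tv⁻¹ * |(Chebyshev.T ℝ (d : ℤ)).eval (z - w * x)| ≤ Tv⁻¹ * 1 :=
          mul_le_mul_of_nonneg_left h1 (by positivity)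
    _ = Tv⁻¹ := mul_one _
    _ ≤ 2 / (1 + 2 * Real.sqrt (a / N)) ^ d := by
        rw [inv_eq_one_div, div_le_div_iff₀ hTvpos h2Tv]
        linarith

lemma log_one_add_ge {u : ℝ} (h0 : 0 ≤ u) (h2 : u ≤ 2) :
    2 * u / (2 + u) ≤ Real.log (1 + u) := by
  have hpos : (0:ℝ) < 2 + u := by linarith
  set s : ℝ := u / (2 + u) with hs
  have hs0 : 0 ≤ s := by positivity
  have hs2 : 2 * s ≤ 1 := by
    rw [hs]; rw [mul_div_assoc', div_le_one hpos]; linarith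
  have hexp : Real.exp (2 * s) ≤ 1 + u := by
    have hb := Real.exp_bound' (by positivity : (0:ℝ) ≤ 2*s) hs2 (by norm_num : 0 < 3)
    have hsum : (∑ m ∈ Finset.range 3, (2*s) ^ m / m.factorial) = 1 + 2*s + 2*s^2 := by
      simp [Finset.sum_range_succ, Nat.factorial]
      ring
    rw [hsum] at hb
    have hb2 : Real.exp (2*s) ≤ 1 + 2*s + 2*s^2 + 2*s^3 := by
      norm_num [Nat.factorial] at hb
      nlinarith [pow_nonneg hs0 3]
    have hid : (1 + 2*s + 2*s^2 + 2*s^3) * (2 + u) ≤ (1 + u) * (2 + u) := by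
      have hexpand : s * (2 + u) = u := by rw [hs]; field_simp
      nlinarith [pow_nonneg hs0 2, pow_nonneg hs0 3, sq_nonneg s]
    have := le_of_mul_le_mul_right (le_trans (mul_le_mul_of_nonneg_right hb2 hpos.le) hid) hpos
    exact this
  have h1u : (0:ℝ) < 1 + u := by linarith
  calc 2 * u / (2 + u) = 2 * s := by rw [hs]; ring
  _ ≤ Real.log (1 + u) := by
      rw [← Real.log_exp (2*s)]
      exact Real.log_le_log (Real.exp_pos _) hexp

lemma log_le_div_e {x : ℝ} (hx : 0 < x) : Real.log x ≤ x / Real.exp 1 := by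
  have h := Real.log_le_sub_one_of_pos (show 0 < x / Real.exp 1 by positivity)
  rw [Real.log_div hx.ne' (Real.exp_pos 1).ne', Real.log_exp] at h
  linarith

lemma log_nine_ge : (109/50:ℝ) ≤ Real.log 9 := by
  rw [show (9:ℝ) = 3^2 by norm_num, Real.log_pow]
  have h3 : (1.09:ℝ) ≤ Real.log 3 := by
    rw [← Real.log_exp 1.09]
    apply Real.log_le_log (Real.exp_pos _)
    have he : Real.exp (1.09:ℝ) = Real.exp 1 * Real.exp 0.09 := by
      rw [← Real.exp_add]; norm_num
    have h1 : Real.exp (1:ℝ) < 2.7182818286 := Real.exp_one_lt_d9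
    have h2 : Real.exp (0.09:ℝ) ≤ 1 / (1 - 0.09) := by
      apply Real.exp_bound_div_one_sub_of_interval <;> norm_num
    rw [he]
    calc Real.exp 1 * Real.exp 0.09 ≤ 2.7182818286 * (1/(1-0.09)) := by
          apply mul_le_mul h1.le h2 (Real.exp_pos _).le (by norm_num)
    _ ≤ 3 := by norm_num
  push_cast
  linarith

lemma log_fivethirds_le : Real.log (5/3) ≤ (13/25:ℝ) := by
  rw [← Real.log_exp (13/25)]
  apply Real.log_le_log (by norm_num)
  have := Real.sum_le_exp_of_nonneg (show (0:ℝ) ≤ (13/25) by norm_num) 4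
  have hsum : (∑ i ∈ Finset.range 4, ((13/25):ℝ) ^ i / i.factorial) = 1 + (13/25) + (13/25)^2/2 + (13/25)^3/6 := by
    simp [Finset.sum_range_succ, Nat.factorial]
  rw [hsum] at this
  nlinarith

lemma log_fiftyfour_le : Real.log 54 ≤ (4:ℝ) := by
  rw [← Real.log_exp 4]
  apply Real.log_le_log (by norm_num)
  have h1 : (2.7182818283:ℝ) < Real.exp 1 := Real.exp_one_gt_d9
  have : Real.exp (4:ℝ) = (Real.exp 1)^4 := by
    rw [← Real.exp_nat_mul]; norm_num
  rw [this]
  calc (54:ℝ) ≤ (2.7182818283:ℝ)^4 := by norm_num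
  _ ≤ (Real.exp 1)^4 := by apply pow_le_pow_left₀ (by norm_num) h1.le


set_option maxHeartbeats 2000000 in
theorem stmt16 (q : ℝ) (hq : 1 ≤ q) (n : ℕ) (K : ℝ) (hK0 : 0 < K) (hK : K < 2) :
    ∃ F : Polynomial ℝ,
      (F.natDegree : ℝ) ≤ Real.sqrt n * (40 * K) ^ (q/2) + 2 ∧
      |F.eval 0| > K * (∑ j ∈ Finset.Icc 1 n, |F.eval (j : ℝ)| ^ q) ^ (1/q) := by
  have hq0 : (0:ℝ) < q := lt_of_lt_of_le one_pos hq
  by_cases hA : K ^ q * (n:ℝ) < 1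
  · -- constant polynomial
    refine ⟨1, ?_, ?_⟩
    · simp only [natDegree_one, Nat.cast_zero]
      positivity
    · have hsum : (∑ j ∈ Finset.Icc 1 n, |eval (j:ℝ) (1:ℝ[X])| ^ q) = (n:ℝ) := by
        simp [Real.one_rpow]
      rw [hsum, eval_one, abs_one]
      rcases Nat.eq_zero_or_pos n with h0 | hpos
      · subst h0
        rw [show ((0:ℕ):ℝ) = 0 by norm_num, Real.zero_rpow (by positivity : (1/q) ≠ 0)]
        simpa using one_pos
      · have hn0 : (0:ℝ) < n := by exact_mod_cast hpos
        have hKn : K * (n:ℝ)^(1/q) = (K^q * n)^(1/q) := by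
          rw [Real.mul_rpow (by positivity) (by positivity), ← Real.rpow_mul hK0.le,
            mul_one_div, div_self hq0.ne', Real.rpow_one]
        have hlt : (K^q * n)^(1/q) < 1 :=
          Real.rpow_lt_one (by positivity) hA (by positivity)
        rw [hKn]
        exact hlt
  · push_neg at hA
    have hn0 : 0 < n := by
      rcases Nat.eq_zero_or_pos n with h0 | h; · exfalso; rw [h0] at hA; simp at hA; linarith
      · exact h
    have hnR : (0:ℝ) < n := by exact_mod_cast hn0
    have hKq0 : (0:ℝ) < K ^ q := Real.rpow_pos_of_pos hK0 q
    set c : ℝ := (3/5) * (K ^ q)⁻¹ with hc_def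
    have hc0 : 0 < c := by positivity
    have hcn : c < n := by
      have h1 : (K ^ q)⁻¹ ≤ n := by
        rw [inv_le_iff_one_le_mul₀ hKq0]
        linarith [hA]
      nlinarith
    set X : ℝ := Real.sqrt (K ^ q * n) with hX_def
    have hX1 : 1 ≤ X := by
      rw [hX_def, show (1:ℝ) = Real.sqrt 1 by simp]
      exact Real.sqrt_le_sqrt hA
    have hX0 : 0 < X := lt_of_lt_of_le one_pos hX1
    have hnc1 : 1 < n / c := by rw [lt_div_iff₀ hc0]; linarith
    have hlog9 : (109/50:ℝ) ≤ Real.log 9 := log_nine_ge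
    have hlog9pos : (0:ℝ) < Real.log 9 := by linarith
    have hlognc : 0 < Real.log (n / c) := Real.log_pos hnc1
    set I : ℕ := ⌈Real.log (n / c) / Real.log 9⌉₊ with hI_def
    have hI1 : 1 ≤ I := by
      rw [hI_def, Nat.one_le_ceil_iff]
      positivity
    have hIb : (n:ℝ) ≤ c * 9 ^ I := by
      have h1 : Real.log (n/c) / Real.log 9 ≤ I := Nat.le_ceil _
      have h2 : Real.log (n/c) ≤ I * Real.log 9 := by
        rw [div_le_iff₀ hlog9pos] at h1; linarith
      have h3 : (n/c : ℝ) ≤ 9 ^ I := by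
        calc (n/c : ℝ) = Real.exp (Real.log (n/c)) := (Real.exp_log (by positivity)).symm
        _ ≤ Real.exp (I * Real.log 9) := Real.exp_le_exp.mpr h2
        _ = (9:ℝ) ^ I := by
            rw [Real.exp_nat_mul, Real.exp_log (by norm_num)]
      rw [div_le_iff₀ hc0] at h3
      calc (n:ℝ) ≤ 9^I * c := h3
      _ = c * 9^I := by ring
    have hIub : (I:ℝ) ≤ Real.log (n/c) / Real.log 9 + 1 :=
      le_of_lt (Nat.ceil_lt_add_one (by positivity))
    set B : ℝ := Real.log 2 + (3/q) * Real.log 3 with hB_def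
    have hBpos : 0 < B := by
      have := Real.log_pos (show (1:ℝ) < 2 by norm_num)
      have := Real.log_pos (show (1:ℝ) < 3 by norm_num)
      have h3q : 0 < 3/q := by positivity
      positivity
    have hB4 : B ≤ 4 := by
      rw [hB_def]
      have h3 : (0:ℝ) < Real.log 3 := Real.log_pos (by norm_num)
      have h3q : (3:ℝ)/q ≤ 3 := by
        rw [div_le_iff₀ hq0]; nlinarith
      have hmul := mul_le_mul_of_nonneg_right h3q h3.le
      have h2 : Real.log 2 + 3 * Real.log 3 = Real.log 54 := by
        rw [show (54:ℝ) = 2 * 3^3 by norm_num, Real.log_mul (by norm_num) (by norm_num),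
          Real.log_pow]
        push_cast; ring
      linarith [log_fiftyfour_le, h2]
    -- scales
    set a : ℕ → ℝ := fun i => c * 9 ^ i with ha_def
    have ha_pos : ∀ i, 0 < a i := fun i => by positivity
    have ha_lt : ∀ i, i < I → a i < n := by
      intro i hi
      have h1 : (i:ℝ) < Real.log (n/c) / Real.log 9 := by
        exact_mod_cast Nat.lt_ceil.mp hi
      have h2 : (i:ℝ) * Real.log 9 < Real.log (n/c) := by
        rw [lt_div_iff₀ hlog9pos] at h1; linarith [h1]
      have h3 : (9:ℝ) ^ i < n / c := by
        calc (9:ℝ)^i = Real.exp (i * Real.log 9) := by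
              rw [Real.exp_nat_mul, Real.exp_log (by norm_num)]
        _ < Real.exp (Real.log (n/c)) := Real.exp_lt_exp.mpr h2
        _ = n/c := Real.exp_log (by positivity)
      rw [ha_def]
      calc c * 9^i < c * (n/c) := by
            apply mul_lt_mul_of_pos_left h3 hc0
      _ = n := by field_simp
    set u : ℕ → ℝ := fun i => 2 * Real.sqrt (a i / n) with hu_def
    have hu0 : ∀ i, 0 < u i := by
      intro i; rw [hu_def]
      have := ha_pos i
      positivity
    have hu2 : ∀ i, i < I → u i ≤ 2 := by
      intro i hi
      rw [hu_def]
      have h1 : Real.sqrt (a i / n) ≤ 1 := by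
        rw [show (1:ℝ) = Real.sqrt 1 by simp]
        apply Real.sqrt_le_sqrt
        rw [div_le_one hnR]
        exact (ha_lt i hi).le
      linarith
    set d : ℕ → ℕ := fun i => ⌈B * (1/(u i) + 1/2)⌉₊ with hd_def
    set ε : ℝ := (3:ℝ) ^ (-(3/q)) with he_def
    have hε0 : 0 < ε := Real.rpow_pos_of_pos (by norm_num) _
    have hε1 : ε ≤ 1 :=
      Real.rpow_le_one_of_one_le_of_nonpos (by norm_num) (neg_nonpos.mpr (by positivity))
    have hεq : ε ^ q = 1/27 := by
      rw [he_def, ← Real.rpow_mul (by norm_num : (0:ℝ) ≤ 3),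
        show (-(3/q))*q = (-3:ℝ) by field_simp,
        show (-3:ℝ) = -((3:ℕ):ℝ) by norm_num,
        Real.rpow_neg (by norm_num : (0:ℝ) ≤ 3), Real.rpow_natCast]
      norm_num
    -- growth: the bump value bound
    have hgrow : ∀ i, i < I → 2 / (1 + u i) ^ (d i) ≤ ε := by
      intro i hi
      have hui0 := hu0 i
      have hui2 := hu2 i hi
      have hlog_u : 2 * u i / (2 + u i) ≤ Real.log (1 + u i) := log_one_add_ge hui0.le hui2
      have hlogpos : 0 < Real.log (1 + u i) := Real.log_pos (by linarith)
      have hdge : B * (1/(u i) + 1/2) ≤ (d i : ℝ) := by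
        rw [hd_def]; exact Nat.le_ceil _
      have hkey : B ≤ (d i : ℝ) * Real.log (1 + u i) := by
        have hfrac : 0 < 2 * u i / (2 + u i) := by positivity
        calc B = (B * (1/(u i) + 1/2)) * (2 * u i / (2 + u i)) := by
              field_simp
        _ ≤ (d i : ℝ) * Real.log (1 + u i) := by
            apply mul_le_mul hdge hlog_u hfrac.le (le_trans (by positivity) hdge)
      have hpow : Real.exp B ≤ (1 + u i) ^ (d i) := by
        calc Real.exp B ≤ Real.exp ((d i : ℝ) * Real.log (1 + u i)) := Real.exp_le_exp.mpr hkey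
        _ = (1 + u i) ^ (d i) := by rw [Real.exp_nat_mul, Real.exp_log (by linarith)]
      have hexpB : Real.exp B = 2 * (3:ℝ)^((3:ℝ)/q) := by
        rw [hB_def, Real.exp_add, Real.exp_log (by norm_num)]
        congr 1
        rw [Real.rpow_def_of_pos (by norm_num : (0:ℝ) < 3), mul_comm]
      have hεinv : ε * (3:ℝ)^((3:ℝ)/q) = 1 := by
        rw [he_def, ← Real.rpow_add (by norm_num : (0:ℝ) < 3)]; norm_num
      have hpowpos : (0:ℝ) < (1 + u i)^(d i) := by positivity
      rw [div_le_iff₀ hpowpos]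
      calc (2:ℝ) = ε * (2 * (3:ℝ)^((3:ℝ)/q)) := by
            rw [show ε * (2 * (3:ℝ)^((3:ℝ)/q)) = 2 * (ε * (3:ℝ)^((3:ℝ)/q)) by ring, hεinv]
            ring
      _ = ε * Real.exp B := by rw [hexpB]
      _ ≤ ε * (1 + u i)^(d i) := mul_le_mul_of_nonneg_left hpow hε0.le
    -- construct the bump polynomials
    choose Hf hHdeg hHeval0 hHb1 hHb2 using
      fun (i : ℕ) (hi : i < I) => bump (a i) (n:ℝ) (ha_pos i) (ha_lt i hi) (d i)
    set H : ℕ → ℝ[X] := fun i => if h : i < I then Hf i h else 1 with hH_def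
    clear_value c X I B a u d ε H
    refine ⟨∏ i ∈ Finset.range I, H i, ?_, ?_⟩
    · -- degree bound
      have hFdeg : ((∏ i ∈ Finset.range I, H i).natDegree : ℝ)
          ≤ ∑ i ∈ Finset.range I, (d i : ℝ) := by
        have h1 : (∏ i ∈ Finset.range I, H i).natDegree
            ≤ ∑ i ∈ Finset.range I, (H i).natDegree := natDegree_prod_le _ _
        have h2 : ∑ i ∈ Finset.range I, (H i).natDegree ≤ ∑ i ∈ Finset.range I, d i := by
          apply Finset.sum_le_sum
          intro i hi
          have hi' := Finset.mem_range.mp hi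
          rw [hH_def]; dsimp only; rw [dif_pos hi']
          exact hHdeg i hi'
        calc ((∏ i ∈ Finset.range I, H i).natDegree : ℝ)
            ≤ ((∑ i ∈ Finset.range I, d i : ℕ) : ℝ) := by exact_mod_cast le_trans h1 h2
        _ = ∑ i ∈ Finset.range I, (d i : ℝ) := by push_cast; ring
      -- bound each d i
      have hgeom : (∑ i ∈ Finset.range I, ((1:ℝ)/3) ^ i) ≤ 3/2 := by
        have h := geom_sum_eq (show ((1:ℝ)/3) ≠ 1 by norm_num) I
        rw [h]
        have hp : (0:ℝ) ≤ (1/3:ℝ)^I := by positivity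
        rw [div_le_iff_of_neg (by norm_num : ((1:ℝ)/3 - 1) < 0)]
        linarith
      have hsqrt_na : ∀ i : ℕ, Real.sqrt ((n:ℝ) / a i) = Real.sqrt ((n:ℝ)/c) * (1/3)^i := by
        intro i
        rw [ha_def]; dsimp only
        rw [show (n:ℝ) / (c * 9^i) = ((n:ℝ)/c) * (1/9)^i by
          field_simp; rw [← mul_pow]; norm_num]
        rw [Real.sqrt_mul (by positivity)]
        congr 1
        rw [show ((1:ℝ)/9)^i = (((1:ℝ)/3)^i)^2 by rw [pow_right_comm]; norm_num,
          Real.sqrt_sq (by positivity)]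
      have hinv_u : ∀ i : ℕ, 1 / u i = Real.sqrt ((n:ℝ)/a i) / 2 := by
        intro i
        rw [hu_def]; dsimp only
        rw [show a i / (n:ℝ) = ((n:ℝ)/(a i))⁻¹ by
          rw [inv_div]]
        rw [Real.sqrt_inv]
        rw [one_div, mul_inv, inv_inv]
        ring
      have hdi : ∀ i ∈ Finset.range I,
          (d i : ℝ) ≤ ((B/2) * Real.sqrt ((n:ℝ)/c)) * (1/3)^i + (B/2 + 1) := by
        intro i hi
        have harg0 : 0 ≤ B * (1/(u i) + 1/2) := by
          have := hu0 i
          positivity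
        have h1 : (d i : ℝ) < B * (1/(u i) + 1/2) + 1 := by
          rw [hd_def]; exact Nat.ceil_lt_add_one harg0
        have h2 : B * (1/(u i) + 1/2) = (B/2) * Real.sqrt ((n:ℝ)/a i) + B/2 := by
          rw [hinv_u i]; ring
        rw [h2, hsqrt_na i] at h1
        linarith
      have hdsum : (∑ i ∈ Finset.range I, (d i:ℝ))
          ≤ 3 * Real.sqrt ((n:ℝ)/c) + 3 * I := by
        calc (∑ i ∈ Finset.range I, (d i:ℝ))
            ≤ ∑ i ∈ Finset.range I, (((B/2) * Real.sqrt ((n:ℝ)/c)) * (1/3)^i + (B/2 + 1)) :=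
              Finset.sum_le_sum hdi
        _ = ((B/2) * Real.sqrt ((n:ℝ)/c)) * (∑ i ∈ Finset.range I, ((1:ℝ)/3)^i)
              + (B/2 + 1) * I := by
            rw [Finset.sum_add_distrib, ← Finset.mul_sum, Finset.sum_const, Finset.card_range,
              nsmul_eq_mul]
            ring
        _ ≤ 3 * Real.sqrt ((n:ℝ)/c) + 3 * I := by
            have hs0 : 0 ≤ Real.sqrt ((n:ℝ)/c) := Real.sqrt_nonneg _
            have hge0 : (0:ℝ) ≤ ∑ i ∈ Finset.range I, ((1:ℝ)/3)^i :=
              Finset.sum_nonneg (fun i _ => by positivity)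
            have hB2 : B/2 ≤ 2 := by linarith
            have hI0 : (0:ℝ) ≤ (I:ℝ) := by positivity
            have t1 : ((B/2) * Real.sqrt ((n:ℝ)/c)) * (∑ i ∈ Finset.range I, ((1:ℝ)/3)^i)
                ≤ (2 * Real.sqrt ((n:ℝ)/c)) * (3/2) := by
              apply mul_le_mul (by nlinarith) hgeom hge0 (by positivity)
            have t2 : (B/2 + 1) * (I:ℝ) ≤ 3 * I := by nlinarith
            nlinarith
      -- budget
      have hsqrt_nc : Real.sqrt ((n:ℝ)/c) ≤ (1291/1000) * X := by
        have hnc_eq : (n:ℝ)/c = (5/3) * (K^q * n) := by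
          rw [hc_def]; field_simp
        rw [hnc_eq, Real.sqrt_mul (by norm_num), hX_def]
        have : Real.sqrt (5/3) ≤ (1291/1000) := by
          calc Real.sqrt (5/3) ≤ Real.sqrt ((1291/1000)^2) := Real.sqrt_le_sqrt (by norm_num)
          _ = (1291/1000) := Real.sqrt_sq (by norm_num)
        nlinarith [Real.sqrt_nonneg (K^q * (n:ℝ)), Real.sqrt_nonneg (5/3:ℝ)]
      have hlogX0 : 0 ≤ Real.log X := Real.log_nonneg hX1
      have hIbound : (I:ℝ) ≤ ((13/25) + 2 * Real.log X)/(109/50) + 1 := by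
        have hnc_eq : (n:ℝ)/c = (5/3) * X^2 := by
          rw [hc_def, hX_def, Real.sq_sqrt (by positivity)]
          field_simp
        have hlognc_eq : Real.log ((n:ℝ)/c) = Real.log (5/3) + 2 * Real.log X := by
          rw [hnc_eq, Real.log_mul (by norm_num) (by positivity), Real.log_pow]
          push_cast; ring
        have h1 : Real.log ((n:ℝ)/c) ≤ (13/25) + 2 * Real.log X := by
          rw [hlognc_eq]
          linarith [log_fivethirds_le]
        have h2 : Real.log ((n:ℝ)/c) / Real.log 9 ≤ ((13/25) + 2 * Real.log X)/(109/50) :=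
          div_le_div₀ (by linarith) h1 (by norm_num) hlog9
        linarith [hIub]
      have hbudget : ((12649/2000):ℝ) * X ≤ Real.sqrt n * (40*K)^(q/2) := by
        have h40 : (40:ℝ) * K^q ≤ (40*K)^q := by
          rw [Real.mul_rpow (by norm_num) hK0.le]
          have h1 : (40:ℝ)^(1:ℝ) ≤ (40:ℝ)^q := Real.rpow_le_rpow_of_exponent_le (by norm_num) hq
          rw [Real.rpow_one] at h1
          exact mul_le_mul_of_nonneg_right h1 (Real.rpow_nonneg hK0.le q)
        have h2 : Real.sqrt n * (40*K)^(q/2) = Real.sqrt ((n:ℝ) * (40*K)^q) := by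
          rw [Real.sqrt_mul (by positivity)]
          congr 1
          rw [Real.sqrt_eq_rpow, ← Real.rpow_mul (by positivity)]
          congr 1; ring
        rw [h2]
        have h3 : ((12649/2000):ℝ) ≤ Real.sqrt 40 := by
          calc ((12649/2000):ℝ) = Real.sqrt ((12649/2000)^2) := (Real.sqrt_sq (by norm_num)).symm
          _ ≤ Real.sqrt 40 := Real.sqrt_le_sqrt (by norm_num)
        calc ((12649/2000):ℝ) * X ≤ Real.sqrt 40 * X := by nlinarith
        _ = Real.sqrt (40 * (K^q * n)) := by
            rw [hX_def, ← Real.sqrt_mul (by norm_num)]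
        _ ≤ Real.sqrt ((n:ℝ) * (40*K)^q) := by
            apply Real.sqrt_le_sqrt
            nlinarith [Real.rpow_nonneg (show (0:ℝ) ≤ 40*K by positivity) q]
      -- numeric finish
      have hnum : 3 * Real.sqrt ((n:ℝ)/c) + 3 * (I:ℝ) ≤ (12649/2000) * X + 2 := by
        have hI' : 3 * (I:ℝ) ≤ 3 * (((13/25) + 2 * Real.log X)/(109/50) + 1) := by linarith
        rcases le_or_gt X 3 with hX3 | hX3
        · have hlogX : Real.log X ≤ X - 1 := by
            linarith [Real.log_le_sub_one_of_pos hX0]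
          nlinarith [hsqrt_nc]
        · have hlogX : Real.log X ≤ X / (271/100) := by
            have h1 : Real.log X ≤ X / Real.exp 1 := log_le_div_e hX0
            have h2 : X / Real.exp 1 ≤ X / (271/100) :=
              div_le_div₀ hX0.le le_rfl (by norm_num)
                (by linarith [Real.exp_one_gt_d9])
            linarith
          nlinarith [hsqrt_nc]
      linarith [hFdeg, hdsum, hnum, hbudget]
    · -- value bound
      have hF0 : (∏ i ∈ Finset.range I, H i).eval 0 = 1 := by
        rw [eval_prod]
        apply Finset.prod_eq_one
        intro i hi
        have hi' := Finset.mem_range.mp hi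
        rw [hH_def]; dsimp only; rw [dif_pos hi']
        exact hHeval0 i hi'
      set m : ℕ → ℕ := fun j => if (j:ℝ) < c then 0
        else min I (⌊Real.logb 9 ((j:ℝ)/c)⌋₊ + 1) with hm_def
      have hm_le_I : ∀ j, m j ≤ I := by
        intro j; rw [hm_def]; dsimp only
        split
        · exact Nat.zero_le I
        · exact min_le_left _ _
      have hm_factors : ∀ j : ℕ, 1 ≤ j → (j:ℝ) ≤ (n:ℝ) → ∀ i, i < m j → a i ≤ (j:ℝ) := by
        intro j hj1 hjn i hi
        have hj0 : (0:ℝ) < j := by exact_mod_cast hj1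
        rw [hm_def] at hi; dsimp only at hi
        by_cases hjc : (j:ℝ) < c
        · rw [if_pos hjc] at hi; exact absurd hi (Nat.not_lt_zero i)
        · rw [if_neg hjc] at hi
          push_neg at hjc
          have hi3 : i ≤ ⌊Real.logb 9 ((j:ℝ)/c)⌋₊ := by
            have := lt_of_lt_of_le hi (min_le_right _ _)
            omega
          have hlb0 : 0 ≤ Real.logb 9 ((j:ℝ)/c) :=
            Real.logb_nonneg (by norm_num) (by rw [le_div_iff₀ hc0]; linarith)
          have hi4 : (i:ℝ) ≤ Real.logb 9 ((j:ℝ)/c) := by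
            calc (i:ℝ) ≤ (⌊Real.logb 9 ((j:ℝ)/c)⌋₊ : ℝ) := by exact_mod_cast hi3
            _ ≤ _ := Nat.floor_le hlb0
          have h9i : (9:ℝ)^i ≤ (j:ℝ)/c := by
            calc (9:ℝ)^i = (9:ℝ)^((i:ℕ):ℝ) := (Real.rpow_natCast 9 i).symm
            _ ≤ (9:ℝ)^(Real.logb 9 ((j:ℝ)/c)) :=
                Real.rpow_le_rpow_of_exponent_le (by norm_num) hi4
            _ = (j:ℝ)/c := Real.rpow_logb (by positivity) (by norm_num) (by positivity)
          rw [ha_def]; dsimp only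
          rw [← le_div_iff₀' hc0]
          exact h9i
      have habs : ∀ j ∈ Finset.Icc 1 n,
          |(∏ i ∈ Finset.range I, H i).eval (j:ℝ)| ≤ ε ^ (m j) := by
        intro j hj
        obtain ⟨hj1, hjn⟩ := Finset.mem_Icc.mp hj
        have hj1R : (1:ℝ) ≤ (j:ℝ) := by exact_mod_cast hj1
        have hjnR : (j:ℝ) ≤ (n:ℝ) := by exact_mod_cast hjn
        rw [eval_prod, Finset.abs_prod]
        calc ∏ i ∈ Finset.range I, |(H i).eval (j:ℝ)|
            ≤ ∏ i ∈ Finset.range I, (if a i ≤ (j:ℝ) then ε else 1) := by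
              apply Finset.prod_le_prod (fun i _ => abs_nonneg _)
              intro i hi
              have hi' := Finset.mem_range.mp hi
              rw [hH_def]; dsimp only; rw [dif_pos hi']
              split_ifs with hcase
              · refine le_trans (hHb2 i hi' (j:ℝ) hcase hjnR) ?_
                have := hgrow i hi'
                rw [hu_def] at this; dsimp only at this
                exact this
              · exact hHb1 i hi' (j:ℝ) (by linarith) hjnR
        _ ≤ ε ^ (m j) := by
            rw [Finset.prod_ite, Finset.prod_const, Finset.prod_const, one_pow, mul_one]
            have hsub : Finset.range (m j) ⊆
                (Finset.range I).filter (fun i => a i ≤ (j:ℝ)) := by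
              intro i hi
              have hi' := Finset.mem_range.mp hi
              exact Finset.mem_filter.mpr
                ⟨Finset.mem_range.mpr (lt_of_lt_of_le hi' (hm_le_I j)),
                  hm_factors j hj1 hjnR i hi'⟩
            have hcard := Finset.card_le_card hsub
            rw [Finset.card_range] at hcard
            exact pow_le_pow_of_le_one hε0.le hε1 hcard
      have hpoint : ∀ j ∈ Finset.Icc 1 n,
          |(∏ i ∈ Finset.range I, H i).eval (j:ℝ)| ^ q ≤ ((1:ℝ)/27) ^ (m j) := by
        intro j hj
        have h1 := habs j hj
        have h2 : |(∏ i ∈ Finset.range I, H i).eval (j:ℝ)| ^ q ≤ (ε ^ (m j)) ^ q :=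
          Real.rpow_le_rpow (abs_nonneg _) h1 hq0.le
        refine le_trans h2 (le_of_eq ?_)
        rw [← Real.rpow_natCast ε (m j), ← Real.rpow_mul hε0.le, mul_comm,
          Real.rpow_mul hε0.le, hεq, Real.rpow_natCast]
      have hfiber : ∀ t : ℕ, t ≤ I →
          ((((Finset.Icc 1 n).filter (fun j => m j ≤ t)).card : ℕ) : ℝ) ≤ c * 9^t := by
        intro t ht
        have hjR : ∀ j ∈ (Finset.Icc 1 n).filter (fun j => m j ≤ t), (j:ℝ) ≤ c * 9^t := by
          intro j hjmem
          obtain ⟨hjIcc, hjm⟩ := Finset.mem_filter.mp hjmem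
          obtain ⟨hj1, hjn⟩ := Finset.mem_Icc.mp hjIcc
          have hj0 : (0:ℝ) < j := by exact_mod_cast hj1
          rcases eq_or_lt_of_le ht with heq | htI
          · subst heq
            calc (j:ℝ) ≤ n := by exact_mod_cast hjn
            _ ≤ c * 9^t := hIb
          · rw [hm_def] at hjm; dsimp only at hjm
            by_cases hjc : (j:ℝ) < c
            · have h9 : (1:ℝ) ≤ 9^t := one_le_pow₀ (by norm_num)
              nlinarith
            · rw [if_neg hjc] at hjm
              push_neg at hjc
              have he_le : ⌊Real.logb 9 ((j:ℝ)/c)⌋₊ + 1 ≤ t := by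
                rcases min_le_iff.mp hjm with h | h
                · omega
                · exact h
              have hlb0 : 0 ≤ Real.logb 9 ((j:ℝ)/c) :=
                Real.logb_nonneg (by norm_num) (by rw [le_div_iff₀ hc0]; linarith)
              have hlt : Real.logb 9 ((j:ℝ)/c) < (t:ℝ) := by
                have h1 : Real.logb 9 ((j:ℝ)/c) < ⌊Real.logb 9 ((j:ℝ)/c)⌋₊ + 1 :=
                  Nat.lt_floor_add_one _
                have h2 : ((⌊Real.logb 9 ((j:ℝ)/c)⌋₊ + 1 : ℕ) : ℝ) ≤ (t:ℝ) := by
                  exact_mod_cast he_le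
                push_cast at h2
                linarith
              have h9t : (j:ℝ)/c < 9^t := by
                calc (j:ℝ)/c = (9:ℝ)^(Real.logb 9 ((j:ℝ)/c)) :=
                      (Real.rpow_logb (by positivity) (by norm_num) (by positivity)).symm
                _ < (9:ℝ)^((t:ℕ):ℝ) :=
                    Real.rpow_lt_rpow_of_exponent_lt (by norm_num) hlt
                _ = (9:ℝ)^t := Real.rpow_natCast 9 t
              rw [div_lt_iff₀ hc0] at h9t
              linarith
        have hsub : (Finset.Icc 1 n).filter (fun j => m j ≤ t) ⊆
            Finset.Icc 1 ⌊c * 9^t⌋₊ := by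
          intro j hjmem
          obtain ⟨hjIcc, -⟩ := Finset.mem_filter.mp hjmem
          obtain ⟨hj1, -⟩ := Finset.mem_Icc.mp hjIcc
          exact Finset.mem_Icc.mpr ⟨hj1, Nat.le_floor (hjR j hjmem)⟩
        calc ((((Finset.Icc 1 n).filter (fun j => m j ≤ t)).card : ℕ) : ℝ)
            ≤ ((Finset.Icc 1 ⌊c * 9^t⌋₊).card : ℝ) := by
              exact_mod_cast Finset.card_le_card hsub
        _ = (⌊c * 9^t⌋₊ : ℝ) := by rw [Nat.card_Icc]; push_cast; ring
        _ ≤ c * 9^t := Nat.floor_le (by positivity)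
      have hlayer : ∀ j : ℕ, ((1:ℝ)/27)^(m j)
          = (∑ t ∈ Finset.range (I+1), if m j ≤ t then (26/27)*((1/27:ℝ))^t else 0)
            + ((1/27:ℝ))^(I+1) := by
        intro j
        have hmI := hm_le_I j
        have hfilter_eq : (Finset.range (I+1)).filter (fun t => m j ≤ t)
            = Finset.Ico (m j) (I+1) := by
          ext t
          simp only [Finset.mem_filter, Finset.mem_range, Finset.mem_Ico]
          omega
        rw [← Finset.sum_filter, hfilter_eq, ← Finset.mul_sum,
          geom_sum_Ico (show ((1:ℝ)/27) ≠ 1 by norm_num) (by omega)]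
        field_simp
        ring
      have hgeom2 : (∑ t ∈ Finset.range (I+1), ((1:ℝ)/3) ^ t) ≤ 3/2 := by
        have h := geom_sum_eq (show ((1:ℝ)/3) ≠ 1 by norm_num) (I+1)
        rw [h]
        have hp : (0:ℝ) ≤ (1/3:ℝ)^(I+1) := by positivity
        rw [div_le_iff_of_neg (by norm_num : ((1:ℝ)/3 - 1) < 0)]
        linarith
      have hsum : (∑ j ∈ Finset.Icc 1 n, |(∏ i ∈ Finset.range I, H i).eval (j:ℝ)| ^ q)
          ≤ (8/9)*(K^q)⁻¹ := by
        have step1 : (∑ j ∈ Finset.Icc 1 n, |(∏ i ∈ Finset.range I, H i).eval (j:ℝ)| ^ q)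
            ≤ ∑ j ∈ Finset.Icc 1 n, ((1:ℝ)/27)^(m j) := Finset.sum_le_sum hpoint
        have step2 : (∑ j ∈ Finset.Icc 1 n, ((1:ℝ)/27)^(m j))
            = (∑ j ∈ Finset.Icc 1 n, ∑ t ∈ Finset.range (I+1),
                (if m j ≤ t then (26/27)*((1/27:ℝ))^t else 0))
              + (n:ℝ) * ((1/27:ℝ))^(I+1) := by
          rw [Finset.sum_congr rfl (fun j _ => hlayer j), Finset.sum_add_distrib,
            Finset.sum_const, Nat.card_Icc, nsmul_eq_mul]
          push_cast
          ring
        have step3 : (∑ j ∈ Finset.Icc 1 n, ∑ t ∈ Finset.range (I+1),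
              (if m j ≤ t then (26/27)*((1/27:ℝ))^t else 0))
            = ∑ t ∈ Finset.range (I+1), ∑ j ∈ Finset.Icc 1 n,
              (if m j ≤ t then (26/27)*((1/27:ℝ))^t else 0) := Finset.sum_comm
        have step4 : ∀ t ∈ Finset.range (I+1),
            (∑ j ∈ Finset.Icc 1 n, (if m j ≤ t then (26/27)*((1/27:ℝ))^t else 0))
            ≤ (26/27)*c*((1/3:ℝ))^t := by
          intro t ht
          have ht' : t ≤ I := by
            have := Finset.mem_range.mp ht; omega
          rw [← Finset.sum_filter, Finset.sum_const, nsmul_eq_mul]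
          have hcard := hfiber t ht'
          have h27 : ((1:ℝ)/27)^t * (9:ℝ)^t = ((1:ℝ)/3)^t := by
            rw [← mul_pow]; norm_num
          calc (((Finset.Icc 1 n).filter (fun j => m j ≤ t)).card : ℝ)
                * ((26/27)*((1/27:ℝ))^t)
              ≤ (c * 9^t) * ((26/27)*((1/27:ℝ))^t) :=
                mul_le_mul_of_nonneg_right hcard (by positivity)
          _ = (26/27)*c*(((1:ℝ)/27)^t * (9:ℝ)^t) := by ring
          _ = (26/27)*c*((1/3:ℝ))^t := by rw [h27]
        have step5 : (∑ t ∈ Finset.range (I+1), ∑ j ∈ Finset.Icc 1 n,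
              (if m j ≤ t then (26/27)*((1/27:ℝ))^t else 0))
            ≤ (13/9) * c := by
          calc (∑ t ∈ Finset.range (I+1), ∑ j ∈ Finset.Icc 1 n,
                (if m j ≤ t then (26/27)*((1/27:ℝ))^t else 0))
              ≤ ∑ t ∈ Finset.range (I+1), (26/27)*c*((1/3:ℝ))^t :=
                Finset.sum_le_sum step4
          _ = (26/27)*c * (∑ t ∈ Finset.range (I+1), ((1/3:ℝ))^t) := by
              rw [← Finset.mul_sum]
          _ ≤ (26/27)*c * (3/2) := by
              apply mul_le_mul_of_nonneg_left hgeom2 (by positivity)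
          _ = (13/9) * c := by ring
        have step6 : (n:ℝ) * ((1/27:ℝ))^(I+1) ≤ c/27 := by
          have h1 : (n:ℝ) * ((1/27:ℝ))^(I+1) ≤ (c * 9^I) * ((1/27:ℝ))^(I+1) := by
            apply mul_le_mul_of_nonneg_right hIb (by positivity)
          have h2 : (c * 9^I) * ((1/27:ℝ))^(I+1) = (c/27) * ((1/3:ℝ))^I := by
            have h3 : ((1:ℝ)/27)^(I+1) = ((1:ℝ)/27)^I * (1/27) := by rw [pow_succ]
            rw [h3]
            have h4 : (9:ℝ)^I * ((1:ℝ)/27)^I = ((1:ℝ)/3)^I := by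
              rw [← mul_pow]; norm_num
            calc (c * 9^I) * (((1:ℝ)/27)^I * (1/27))
                = (c/27) * ((9:ℝ)^I * ((1:ℝ)/27)^I) := by ring
            _ = (c/27) * ((1:ℝ)/3)^I := by rw [h4]
          have h5 : (c/27) * ((1/3:ℝ))^I ≤ (c/27) * 1 := by
            apply mul_le_mul_of_nonneg_left _ (by positivity)
            exact pow_le_one₀ (by norm_num) (by norm_num)
          rw [mul_one] at h5
          linarith [h1, h2 ▸ h1]
        calc (∑ j ∈ Finset.Icc 1 n, |(∏ i ∈ Finset.range I, H i).eval (j:ℝ)| ^ q)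
            ≤ ∑ j ∈ Finset.Icc 1 n, ((1:ℝ)/27)^(m j) := step1
        _ = _ + _ := step2
        _ ≤ (13/9)*c + c/27 := by
            rw [step3] at *
            linarith [step5, step6]
        _ = (40/27) * c := by ring
        _ = (8/9)*(K^q)⁻¹ := by rw [hc_def]; ring
      -- conclude
      rw [hF0, abs_one]
      have hS0 : 0 ≤ (∑ j ∈ Finset.Icc 1 n, |(∏ i ∈ Finset.range I, H i).eval (j:ℝ)| ^ q) :=
        Finset.sum_nonneg (fun j _ => Real.rpow_nonneg (abs_nonneg _) q)
      have h1 : ((∑ j ∈ Finset.Icc 1 n, |(∏ i ∈ Finset.range I, H i).eval (j:ℝ)| ^ q))^(1/q)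
          < ((K^q)⁻¹)^(1/q) := by
        apply lt_of_le_of_lt (Real.rpow_le_rpow hS0 hsum (by positivity))
        apply Real.rpow_lt_rpow (by positivity) _ (by positivity)
        nlinarith [hKq0]
      have h2 : ((K^q)⁻¹)^((1:ℝ)/q) = K⁻¹ := by
        rw [← Real.rpow_neg hK0.le q, ← Real.rpow_mul hK0.le,
          show -q * (1/q) = (-1:ℝ) by field_simp, Real.rpow_neg_one]
      rw [h2] at h1
      calc K * ((∑ j ∈ Finset.Icc 1 n, |(∏ i ∈ Finset.range I, H i).eval (j:ℝ)| ^ q))^(1/q)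
          < K * K⁻¹ := by exact mul_lt_mul_of_pos_left h1 hK0
      _ = 1 := mul_inv_cancel₀ hK0.ne'
end

section
/- For every n ∈ ℕ and every real K with 1 < K < 2 there exists a polynomial F with real coefficients of degree m ≤ √(n(K−1)/2) + 1 such that |F(0)| > K·max_{j ∈ {1,2,…,n}} |F(j)|. -/
open Polynomial Real

lemma ndT_le : ∀ k : ℕ, (Chebyshev.T ℝ k).natDegree ≤ k := by
  intro k
  induction k using Nat.strong_induction_on with
  | _ k ih =>
    match k with
    | 0 => simp
    | 1 => simp [natDegree_X_le]
    | (k+2) =>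
      have h1 := ih (k+1) (by omega)
      have h0 := ih k (by omega)
      have hrec : Chebyshev.T ℝ ((k:ℤ)+2) = 2 * X * Chebyshev.T ℝ ((k:ℤ)+1) - Chebyshev.T ℝ k :=
        Chebyshev.T_add_two ℝ k
      have : ((k+2:ℕ):ℤ) = (k:ℤ)+2 := by push_cast; ring
      rw [this, hrec]
      refine le_trans (natDegree_sub_le _ _) ?_
      have h2 : (2 * X * Chebyshev.T ℝ ((k:ℤ)+1)).natDegree ≤ k + 2 := by
        refine le_trans (natDegree_mul_le) ?_
        have : (2 * X : ℝ[X]).natDegree ≤ 1 := le_trans natDegree_mul_le (by simp [natDegree_X_le])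
        have h1' : (Chebyshev.T ℝ ((k:ℤ)+1)).natDegree ≤ k+1 := by
          have : ((k+1:ℕ):ℤ) = (k:ℤ)+1 := by push_cast; ring
          rw [← this]; exact h1
        omega
      simp only [max_le_iff]
      exact ⟨h2, by omega⟩

lemma sinh_mul_ge (x : ℝ) (hx : 0 ≤ x) : ∀ m : ℕ, (m:ℝ) * Real.sinh x ≤ Real.sinh (m * x) := by
  intro m
  induction m with
  | zero => simp
  | succ m ih =>
    have h1 : Real.sinh ((m+1:ℕ) * x) = Real.sinh ((m:ℝ)*x) * Real.cosh x + Real.cosh ((m:ℝ)*x) * Real.sinh x := by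
      push_cast; rw [add_mul, one_mul, Real.sinh_add]
    have hc1 : 1 ≤ Real.cosh x := Real.one_le_cosh x
    have hc2 : 1 ≤ Real.cosh ((m:ℝ)*x) := Real.one_le_cosh _
    have hs1 : 0 ≤ Real.sinh ((m:ℝ)*x) := Real.sinh_nonneg_iff.2 (by positivity)
    have hs2 : 0 ≤ Real.sinh x := Real.sinh_nonneg_iff.2 hx
    push_cast
    push_cast at h1 ih
    nlinarith

lemma T_real_cosh (m : ℕ) (t : ℝ) :
    (Chebyshev.T ℝ m).eval (Real.cosh t) = Real.cosh (m * t) := by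
  have key : (↑((Chebyshev.T ℝ (m:ℤ)).eval (Real.cosh t)) : ℂ) = ((Real.cosh (m*t) : ℝ) : ℂ) := by
    have hmap : (Chebyshev.T ℝ (m:ℤ)).map (algebraMap ℝ ℂ) = Chebyshev.T ℂ m :=
      Chebyshev.map_T _ _
    calc (↑((Chebyshev.T ℝ (m:ℤ)).eval (Real.cosh t)) : ℂ)
        = ((Chebyshev.T ℝ (m:ℤ)).map (algebraMap ℝ ℂ)).eval ((Real.cosh t : ℝ) : ℂ) := by
          rw [eval_map]
          exact (eval₂_at_apply (algebraMap ℝ ℂ) _).symm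
      _ = (Chebyshev.T ℂ m).eval (Complex.cos (t * Complex.I)) := by
          rw [hmap, Complex.ofReal_cosh, ← Complex.cos_mul_I]
      _ = Complex.cos (m * (t * Complex.I)) := Chebyshev.T_complex_cos _ _
      _ = Complex.cosh (m * t) := by
          rw [← Complex.cos_mul_I ((m:ℂ) * t)]; ring_nf
      _ = ((Real.cosh (m*t) : ℝ) : ℂ) := by rw [Complex.ofReal_cosh]; norm_num
  exact_mod_cast key

lemma T_abs_le (m : ℕ) (y : ℝ) (hy : y ∈ Set.Icc (-1:ℝ) 1) :
    |(Chebyshev.T ℝ m).eval y| ≤ 1 := by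
  have : y = Real.cos (Real.arccos y) := (Real.cos_arccos hy.1 hy.2).symm
  rw [this, Chebyshev.T_real_cos]
  exact Real.abs_cos_le_one _

lemma aux_arith (n : ℕ) (K : ℝ) (hK1 : 1 < K) (hK : K < 2)
    (hsinh : ∀ (x:ℝ), 0 ≤ x → ∀ m : ℕ, (m:ℝ) * Real.sinh x ≤ Real.sinh (m * x)) :
    ∃ (m : ℕ) (a b t : ℝ),
      (m:ℝ) ≤ Real.sqrt ((n+2:ℕ) * (K - 1) / 2) + 1 ∧
      Real.cosh t = a ∧
      K < Real.cosh ((m:ℝ) * t) ∧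
      ∀ j : ℕ, 1 ≤ j → j ≤ n+2 → a + b * (j:ℝ) ∈ Set.Icc (-1:ℝ) 1 := by
  obtain ⟨N, hNdef⟩ : ∃ N:ℝ, N = ((n+2:ℕ) : ℝ) := ⟨_, rfl⟩
  have hN : (2:ℝ) ≤ N := by
    rw [hNdef]; push_cast; linarith [Nat.cast_nonneg (α := ℝ) n]
  have hd : (0:ℝ) < N - 1 := by linarith
  obtain ⟨s, hsdef⟩ : ∃ s:ℝ, s = Real.sqrt (N * (K - 1) / 2) := ⟨_, rfl⟩
  obtain ⟨m, hmdef⟩ : ∃ m:ℕ, m = Nat.floor s + 1 := ⟨_, rfl⟩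
  have hsnn : (0:ℝ) ≤ s := by rw [hsdef]; positivity
  have hms : s < (m:ℝ) := by
    have := Nat.lt_floor_add_one s
    push_cast [hmdef]; exact_mod_cast this
  have hmle : (m:ℝ) ≤ s + 1 := by
    push_cast [hmdef]; linarith [Nat.floor_le hsnn]
  have hm2 : N * (K-1) / 2 < (m:ℝ)^2 := by
    have h1 : s^2 = N * (K-1)/2 := by rw [hsdef]; exact Real.sq_sqrt (by nlinarith)
    nlinarith [hsnn]
  obtain ⟨a, hadef⟩ : ∃ a:ℝ, a = (N+1)/(N-1) := ⟨_, rfl⟩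
  obtain ⟨b, hbdef⟩ : ∃ b:ℝ, b = -2/(N-1) := ⟨_, rfl⟩
  have ha1 : 1 < a := by rw [hadef, lt_div_iff₀ hd]; linarith
  have ha0 : 0 < a - 1 := by linarith
  have ha2 : a - 1 = 2/(N-1) := by rw [hadef]; field_simp; ring
  obtain ⟨r, hrdef⟩ : ∃ r:ℝ, r = Real.sqrt (a^2 - 1) := ⟨_, rfl⟩
  have hr2 : r^2 = a^2 - 1 := by rw [hrdef]; exact Real.sq_sqrt (by nlinarith)
  have hr0 : 0 ≤ r := hrdef ▸ Real.sqrt_nonneg _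
  have hpos : (0:ℝ) < a + r := by linarith
  obtain ⟨t, htdef⟩ : ∃ t:ℝ, t = Real.log (a + r) := ⟨_, rfl⟩
  have ht : 0 ≤ t := htdef ▸ Real.log_nonneg (by nlinarith)
  have hcosh : Real.cosh t = a := by
    rw [htdef, Real.cosh_eq, Real.exp_log hpos, Real.exp_neg, Real.exp_log hpos]
    have hmul : (a + r) * (a - r) = 1 := by nlinarith
    rw [inv_eq_of_mul_eq_one_right hmul]; ring
  refine ⟨m, a, b, t, by rw [← hNdef, ← hsdef]; exact hmle, hcosh, ?_, ?_⟩
  · have hs0 : 0 ≤ Real.sinh (t/2) := Real.sinh_nonneg_iff.2 (by linarith)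
    have hsh : (m:ℝ) * Real.sinh (t/2) ≤ Real.sinh ((m:ℝ)*t/2) := by
      have := hsinh (t/2) (by linarith) m
      rw [show (m:ℝ) * (t/2) = (m:ℝ)*t/2 by ring] at this
      exact this
    have hc1 : Real.cosh t = 2 * Real.sinh (t/2)^2 + 1 := by
      rw [show t = 2*(t/2) by ring, Real.cosh_two_mul, Real.cosh_sq]; ring_nf
    have hc2 : Real.cosh ((m:ℝ)*t) = 2 * Real.sinh ((m:ℝ)*t/2)^2 + 1 := by
      rw [show (m:ℝ)*t = 2*((m:ℝ)*t/2) by ring, Real.cosh_two_mul, Real.cosh_sq]; ring_nf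
    have hsq : ((m:ℝ)*Real.sinh (t/2))^2 ≤ Real.sinh ((m:ℝ)*t/2)^2 := by
      have h0 : 0 ≤ (m:ℝ)*Real.sinh (t/2) := mul_nonneg (Nat.cast_nonneg m) hs0
      exact pow_le_pow_left₀ h0 hsh 2
    have ha3 : a - 1 = 2*Real.sinh (t/2)^2 := by rw [← hcosh, hc1]; ring
    have hkey : 1 + (m:ℝ)^2 * (a - 1) ≤ Real.cosh ((m:ℝ)*t) := by
      rw [hc2, ha3]
      rw [mul_pow] at hsq
      linarith
    have h6 : K - 1 < N*(K-1)/2*(a-1) := by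
      rw [ha2, show N*(K-1)/2*(2/(N-1)) = (N*(K-1))/(N-1) by field_simp,
        lt_div_iff₀ hd, mul_comm]
      exact mul_lt_mul_of_pos_right (by linarith) (by linarith)
    have h7 : N*(K-1)/2*(a-1) < (m:ℝ)^2*(a-1) := mul_lt_mul_of_pos_right hm2 ha0
    linarith
  · intro j hj1n hj2n
    have hj2 : (j:ℝ) ≤ N := by rw [hNdef]; exact_mod_cast hj2n
    have hj1 : (1:ℝ) ≤ (j:ℝ) := by exact_mod_cast hj1n
    have hyeq : a + b*(j:ℝ) = (N+1-2*(j:ℝ))/(N-1) := by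
      rw [hadef, hbdef]; field_simp; ring
    rw [hyeq]
    constructor
    · rw [le_div_iff₀ hd]; linarith
    · rw [div_le_one hd]; linarith
theorem stmt18 (n : ℕ) (K : ℝ) (hK1 : 1 < K) (hK : K < 2) :
    ∃ F : Polynomial ℝ,
      (F.natDegree : ℝ) ≤ Real.sqrt (n * (K - 1) / 2) + 1 ∧
      ∀ j ∈ Finset.Icc 1 n, |F.eval 0| > K * |F.eval (j : ℝ)| := by
  match n with
  | 0 =>
    refine ⟨1, by simpa using Real.sqrt_nonneg _, by simp⟩
  | 1 =>
    refine ⟨X - C 1, ?_, ?_⟩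
    · rw [natDegree_X_sub_C]; push_cast
      linarith [Real.sqrt_nonneg ((1:ℝ) * (K - 1) / 2)]
    · intro j hj
      simp only [Finset.mem_Icc] at hj
      have : j = 1 := by omega
      subst this
      norm_num
  | (n+2) =>
    obtain ⟨m, a, b, t, hmle, hcosh, hKlt, hy⟩ := aux_arith n K hK1 hK sinh_mul_ge
    obtain ⟨q, hqdef⟩ : ∃ q:ℝ[X], q = C a + C b * X := ⟨_, rfl⟩
    obtain ⟨P, hP⟩ : ∃ P:ℝ[X], P = Chebyshev.T ℝ (m:ℤ) := ⟨_, rfl⟩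
    have hPdeg : P.natDegree ≤ m := hP ▸ ndT_le m
    have hPcosh : ∀ u:ℝ, P.eval (Real.cosh u) = Real.cosh ((m:ℝ)*u) := by
      intro u; rw [hP]; exact T_real_cosh m u
    have hPabs : ∀ y ∈ Set.Icc (-1:ℝ) 1, |P.eval y| ≤ 1 := by
      intro y hy; rw [hP]; exact T_abs_le m y hy
    have hqeval : ∀ x : ℝ, q.eval x = a + b * x := by intro x; simp [hqdef]
    refine ⟨P.comp q, ?_, ?_⟩
    · have h1 : (P.comp q).natDegree ≤ m * 1 := by
        refine le_trans (natDegree_comp_le) (Nat.mul_le_mul hPdeg ?_)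
        rw [hqdef]
        refine le_trans (natDegree_add_le _ _) ?_
        simp only [natDegree_C, max_le_iff]
        exact ⟨by omega, le_trans natDegree_mul_le (by simp [natDegree_X_le])⟩
      have h2 : ((P.comp q).natDegree : ℝ) ≤ (m:ℝ) := by
        exact_mod_cast le_trans h1 (le_of_eq (Nat.mul_one m))
      exact le_trans h2 hmle
    · intro j hj
      simp only [Finset.mem_Icc] at hj
      have hF0 : (P.comp q).eval 0 = Real.cosh ((m:ℝ) * t) := by
        rw [eval_comp, hqeval, mul_zero, add_zero, ← hcosh, hPcosh]
      have hFj : |(P.comp q).eval (j:ℝ)| ≤ 1 := by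
        rw [eval_comp, hqeval]
        exact hPabs _ (hy j hj.1 hj.2)
      have hcpos : (0:ℝ) < Real.cosh ((m:ℝ)*t) := lt_of_lt_of_le one_pos (Real.one_le_cosh _)
      rw [hF0, abs_of_pos hcpos]
      calc K * |(P.comp q).eval (j:ℝ)| ≤ K * 1 :=
            mul_le_mul_of_nonneg_left hFj (le_of_lt (lt_trans zero_lt_one hK1))
        _ = K := mul_one K
        _ < Real.cosh ((m:ℝ)*t) := hKlt
end
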